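/- arXiv:1211.1287 — 8 statements merged into one kernel-verified Lean document; each statement's English description precedes it below -/
import Mathlib

section
/- Let $K$ be a field and $U, V, W$ finite-dimensional $K$-vector spaces. Suppose $R_{UV} \in \mathrm{End}(U\otimes V)$ is invertible, $R_{UW} \in \mathrm{End}(U\otimes W)$ and $R_{VW} \in \mathrm{End}(V\otimes W)$ satisfy the Yang–Baxter equation $R_{UV,12}\,R_{UW,13}\,R_{VW,23} = R_{VW,23}\,R_{UW,13}\,R_{UV,12}$ in $\mathrm{End}(U\otimes V\otimes W)$, and suppose $m_U \in \mathrm{End}(U)$, $m_V \in \mathrm{End}(V)$ satisfy $(m_U\otimes m_V)\circ R_{UV} = R_{UV}\circ(m_U\otimes m_V)$. Then the transfer operators $T_U := \mathrm{tr}_U\big((m_U\otimes\mathrm{id}_W)\,R_{UW}\big)$ and $T_V := \mathrm{tr}_V\big((m_V\otimes\mathrm{id}_W)\,R_{VW}\big)$ commute in $\mathrm{End}(W)$. -/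
/-!
Commutativity of Baxter (transfer-matrix) operators: if `R_{UV}` is invertible, the
`R`-matrices satisfy the Yang–Baxter equation, and `(m_U ⊗ m_V)` commutes with `R_{UV}`,
then the transfer operators `tr_U((m_U ⊗ 1) R_{UW})` and `tr_V((m_V ⊗ 1) R_{VW})`
commute in `End(W)`.
-/

open scoped TensorProduct

noncomputable section

section FrozenDefs

variable (K : Type*) [Field K]
variable (U V W : Type*)
variable [AddCommGroup U] [Module K U] [AddCommGroup V] [Module K V]
variable [AddCommGroup W] [Module K W]

/-- The operator acting as `R` on tensor factors 1 and 2 of `U ⊗ (V ⊗ W)`. -/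
def R12op (R : Module.End K (U ⊗[K] V)) : Module.End K (U ⊗[K] (V ⊗[K] W)) :=
  (TensorProduct.assoc K U V W).toLinearMap ∘ₗ
    LinearMap.rTensor W R ∘ₗ (TensorProduct.assoc K U V W).symm.toLinearMap

/-- The operator acting as `R` on tensor factors 2 and 3 of `U ⊗ (V ⊗ W)`. -/
def R23op (R : Module.End K (V ⊗[K] W)) : Module.End K (U ⊗[K] (V ⊗[K] W)) :=
  LinearMap.lTensor U R

/-- The canonical isomorphism `U ⊗ (V ⊗ W) ≃ (U ⊗ W) ⊗ V` regrouping factors 1 and 3. -/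
def perm13 : (U ⊗[K] (V ⊗[K] W)) ≃ₗ[K] ((U ⊗[K] W) ⊗[K] V) :=
  TensorProduct.congr (LinearEquiv.refl K U) (TensorProduct.comm K V W) ≪≫ₗ
    (TensorProduct.assoc K U W V).symm

/-- The operator acting as `R` on tensor factors 1 and 3 of `U ⊗ (V ⊗ W)`. -/
def R13op (R : Module.End K (U ⊗[K] W)) : Module.End K (U ⊗[K] (V ⊗[K] W)) :=
  (perm13 K U V W).symm.toLinearMap ∘ₗ LinearMap.rTensor V R ∘ₗ (perm13 K U V W).toLinearMap

end FrozenDefs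

section BaxterAuxSec

namespace BaxterAux

variable {K : Type*} [Field K] {X Y : Type*}
variable [AddCommGroup X] [Module K X] [AddCommGroup Y] [Module K Y]

lemma mapMul (f f' : Module.End K X) (g g' : Module.End K Y) :
    TensorProduct.map f g * TensorProduct.map f' g' = TensorProduct.map (f * f') (g * g') := by
  simp [Module.End.mul_eq_comp, ← TensorProduct.map_comp]

lemma map_one_one :
    TensorProduct.map (1 : Module.End K X) (1 : Module.End K Y) = 1 :=
  TensorProduct.map_id

variable (K X Y) in
lemma end_span_top [FiniteDimensional K X] [FiniteDimensional K Y] :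
    Submodule.span K {A : Module.End K (X ⊗[K] Y) |
      ∃ φ ψ, TensorProduct.map φ ψ = A} = ⊤ := by
  set e := homTensorHomEquiv K X Y X Y with he
  have himg : {A : Module.End K (X ⊗[K] Y) | ∃ φ ψ, TensorProduct.map φ ψ = A}
      = e.toLinearMap '' {t | ∃ m n, m ⊗ₜ n = t} := by
    ext A
    constructor
    · rintro ⟨φ, ψ, rfl⟩
      exact ⟨φ ⊗ₜ ψ, ⟨φ, ψ, rfl⟩, by simp [he]⟩
    · rintro ⟨t, ⟨m, n, rfl⟩, rfl⟩
      exact ⟨m, n, by simp [he]⟩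
  rw [himg, ← Submodule.map_span, TensorProduct.span_tmul_eq_top, Submodule.map_top]
  exact LinearEquiv.range e

variable (K X Y) in
lemma end_induction [FiniteDimensional K X] [FiniteDimensional K Y]
    {P : Module.End K (X ⊗[K] Y) → Prop}
    (hgen : ∀ φ ψ, P (TensorProduct.map φ ψ)) (h0 : P 0)
    (hadd : ∀ a b, P a → P b → P (a + b)) (hsmul : ∀ (c : K) a, P a → P (c • a)) :
    ∀ A, P A := by
  intro A
  have hA : A ∈ (⊤ : Submodule K (Module.End K (X ⊗[K] Y))) := trivial
  rw [← end_span_top K X Y] at hA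
  refine Submodule.span_induction ?_ h0 (fun a b _ _ => hadd a b)
    (fun c a _ => hsmul c a) hA
  rintro A ⟨φ, ψ, rfl⟩
  exact hgen φ ψ

variable (K X Y) in
/-- The partial trace over the first factor. -/
def ptr [FiniteDimensional K X] [FiniteDimensional K Y] :
    Module.End K (X ⊗[K] Y) →ₗ[K] Module.End K Y :=
  TensorProduct.lift ((LinearMap.lsmul K (Module.End K Y)) ∘ₗ (LinearMap.trace K X)) ∘ₗ
    (homTensorHomEquiv K X Y X Y).symm.toLinearMap

lemma ptr_map [FiniteDimensional K X] [FiniteDimensional K Y]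
    (φ : Module.End K X) (ψ : Module.End K Y) :
    ptr K X Y (TensorProduct.map φ ψ) = LinearMap.trace K X φ • ψ := by
  have h : (homTensorHomEquiv K X Y X Y).symm (TensorProduct.map φ ψ)
      = φ ⊗ₜ ψ := by
    rw [LinearEquiv.symm_apply_eq]; simp
  simp [ptr, h]

section trLemmas

variable [FiniteDimensional K X] [FiniteDimensional K Y]
variable (tr : Module.End K (X ⊗[K] Y) →ₗ[K] Module.End K Y)
variable (htr : ∀ (φ : Module.End K X) (ψ : Module.End K Y),
    tr (TensorProduct.map φ ψ) = LinearMap.trace K X φ • ψ)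

include htr

lemma tr_one_mul (ψ : Module.End K Y) :
    ∀ A, tr (TensorProduct.map (1 : Module.End K X) ψ * A) = ψ * tr A := by
  refine end_induction K X Y ?_ ?_ ?_ ?_
  · intro φ' ψ'
    rw [mapMul, htr, htr, one_mul, mul_smul_comm]
  · simp
  · intro a b ha hb; rw [mul_add, map_add, ha, hb, map_add, mul_add]
  · intro c a ha; rw [mul_smul_comm, map_smul, ha, map_smul, mul_smul_comm]

lemma tr_mul_one (ψ : Module.End K Y) :
    ∀ A, tr (A * TensorProduct.map (1 : Module.End K X) ψ) = tr A * ψ := by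
  refine end_induction K X Y ?_ ?_ ?_ ?_
  · intro φ' ψ'
    rw [mapMul, htr, htr, mul_one, smul_mul_assoc]
  · simp
  · intro a b ha hb; rw [add_mul, map_add, ha, hb, map_add, add_mul]
  · intro c a ha; rw [smul_mul_assoc, map_smul, ha, map_smul, smul_mul_assoc]

lemma tr_cyc (S : Module.End K X) :
    ∀ A, tr (A * TensorProduct.map S (1 : Module.End K Y)) =
      tr (TensorProduct.map S (1 : Module.End K Y) * A) := by
  refine end_induction K X Y ?_ ?_ ?_ ?_
  · intro φ' ψ'
    rw [mapMul, mapMul, htr, htr, mul_one, one_mul, LinearMap.trace_mul_comm]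
  · simp
  · intro a b ha hb; rw [add_mul, mul_add, map_add, map_add, ha, hb]
  · intro c a ha; rw [smul_mul_assoc, mul_smul_comm, map_smul, map_smul, ha]

end trLemmas

end BaxterAux

end BaxterAuxSec


variable (K : Type*) [Field K]
variable (U V W : Type*)
variable [AddCommGroup U] [Module K U] [AddCommGroup V] [Module K V]
variable [AddCommGroup W] [Module K W]

section RopLemmas

open TensorProduct LinearMap

lemma R13op_map (φ : Module.End K U) (ψ : Module.End K W) :
    R13op K U V W (TensorProduct.map φ ψ) =
      TensorProduct.map φ (TensorProduct.map (1 : Module.End K V) ψ) := by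
  ext u v w
  simp [R13op, perm13]

lemma R12op_map (φ : Module.End K U) (ψ : Module.End K V) :
    R12op K U V W (TensorProduct.map φ ψ) =
      TensorProduct.map φ (TensorProduct.map ψ (1 : Module.End K W)) := by
  ext u v w
  simp [R12op]

lemma R13op_mul (A B : Module.End K (U ⊗[K] W)) :
    R13op K U V W (A * B) = R13op K U V W A * R13op K U V W B := by
  ext x
  simp [R13op, LinearMap.rTensor_mul, Module.End.mul_apply]

lemma R12op_mul (A B : Module.End K (U ⊗[K] V)) :
    R12op K U V W (A * B) = R12op K U V W A * R12op K U V W B := by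
  ext x
  simp [R12op, LinearMap.rTensor_mul, Module.End.mul_apply]

lemma R12op_one : R12op K U V W 1 = 1 := by
  ext x
  simp [R12op, Module.End.one_eq_id]

lemma R13op_zero : R13op K U V W 0 = 0 := by
  ext x
  simp [R13op]

lemma R12op_zero : R12op K U V W 0 = 0 := by
  ext x
  simp [R12op]

lemma R13op_add (A B : Module.End K (U ⊗[K] W)) :
    R13op K U V W (A + B) = R13op K U V W A + R13op K U V W B := by
  ext x
  simp [R13op, LinearMap.rTensor_add]

lemma R12op_add (A B : Module.End K (U ⊗[K] V)) :
    R12op K U V W (A + B) = R12op K U V W A + R12op K U V W B := by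
  ext x
  simp [R12op, LinearMap.rTensor_add]

lemma R13op_smul (c : K) (A : Module.End K (U ⊗[K] W)) :
    R13op K U V W (c • A) = c • R13op K U V W A := by
  ext x
  simp [R13op, LinearMap.rTensor_smul]

lemma R12op_smul (c : K) (A : Module.End K (U ⊗[K] V)) :
    R12op K U V W (c • A) = c • R12op K U V W A := by
  ext x
  simp [R12op, LinearMap.rTensor_smul]

lemma R23op_eq (B : Module.End K (V ⊗[K] W)) :
    R23op K U V W B = TensorProduct.map (1 : Module.End K U) B := rfl

lemma R13op_comm_mid [FiniteDimensional K U] [FiniteDimensional K W] (mV : Module.End K V) :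
    ∀ A : Module.End K (U ⊗[K] W),
      TensorProduct.map (1 : Module.End K U) (TensorProduct.map mV (1 : Module.End K W)) *
          R13op K U V W A =
        R13op K U V W A *
          TensorProduct.map (1 : Module.End K U) (TensorProduct.map mV (1 : Module.End K W)) := by
  refine BaxterAux.end_induction K U W ?_ ?_ ?_ ?_
  · intro φ ψ
    rw [R13op_map]
    simp [BaxterAux.mapMul]
  · simp [R13op_zero]
  · intro a b ha hb
    rw [R13op_add, mul_add, add_mul, ha, hb]
  · intro c a ha
    rw [R13op_smul, mul_smul_comm, smul_mul_assoc, ha]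

variable [FiniteDimensional K U] [FiniteDimensional K V] [FiniteDimensional K W]

lemma step_left
    (trU : Module.End K (U ⊗[K] W) →ₗ[K] Module.End K W)
    (htrU : ∀ (φ : Module.End K U) (ψ : Module.End K W),
      trU (TensorProduct.map φ ψ) = LinearMap.trace K U φ • ψ)
    (trV : Module.End K (V ⊗[K] W) →ₗ[K] Module.End K W)
    (htrV : ∀ (φ : Module.End K V) (ψ : Module.End K W),
      trV (TensorProduct.map φ ψ) = LinearMap.trace K V φ • ψ)
    (Q : Module.End K (V ⊗[K] W)) :
    ∀ P : Module.End K (U ⊗[K] W),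
      trV (BaxterAux.ptr K U (V ⊗[K] W) (R13op K U V W P * R23op K U V W Q)) =
        trU P * trV Q := by
  refine BaxterAux.end_induction K U W ?_ ?_ ?_ ?_
  · intro φ ψ
    rw [R13op_map, R23op_eq, BaxterAux.mapMul, mul_one, BaxterAux.ptr_map, map_smul,
      BaxterAux.tr_one_mul trV htrV ψ Q, htrU, smul_mul_assoc]
  · simp [R13op_zero]
  · intro a b ha hb
    rw [R13op_add, add_mul, map_add, map_add, ha, hb, map_add, add_mul]
  · intro c a ha
    rw [R13op_smul, smul_mul_assoc, map_smul, map_smul, ha, map_smul, smul_mul_assoc]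

lemma step_right
    (trU : Module.End K (U ⊗[K] W) →ₗ[K] Module.End K W)
    (htrU : ∀ (φ : Module.End K U) (ψ : Module.End K W),
      trU (TensorProduct.map φ ψ) = LinearMap.trace K U φ • ψ)
    (trV : Module.End K (V ⊗[K] W) →ₗ[K] Module.End K W)
    (htrV : ∀ (φ : Module.End K V) (ψ : Module.End K W),
      trV (TensorProduct.map φ ψ) = LinearMap.trace K V φ • ψ)
    (Q : Module.End K (V ⊗[K] W)) :
    ∀ P : Module.End K (U ⊗[K] W),
      trV (BaxterAux.ptr K U (V ⊗[K] W) (R23op K U V W Q * R13op K U V W P)) =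
        trV Q * trU P := by
  refine BaxterAux.end_induction K U W ?_ ?_ ?_ ?_
  · intro φ ψ
    rw [R13op_map, R23op_eq, BaxterAux.mapMul, one_mul, BaxterAux.ptr_map, map_smul,
      BaxterAux.tr_mul_one trV htrV ψ Q, htrU, mul_smul_comm]
  · simp [R13op_zero]
  · intro a b ha hb
    rw [R13op_add, mul_add, map_add, map_add, ha, hb, map_add, mul_add]
  · intro c a ha
    rw [R13op_smul, mul_smul_comm, map_smul, map_smul, ha, map_smul, mul_smul_comm]

lemma T_cyc
    (trV : Module.End K (V ⊗[K] W) →ₗ[K] Module.End K W)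
    (htrV : ∀ (φ : Module.End K V) (ψ : Module.End K W),
      trV (TensorProduct.map φ ψ) = LinearMap.trace K V φ • ψ) :
    ∀ (S : Module.End K (U ⊗[K] V)) (A : Module.End K (U ⊗[K] (V ⊗[K] W))),
      trV (BaxterAux.ptr K U (V ⊗[K] W) (A * R12op K U V W S)) =
        trV (BaxterAux.ptr K U (V ⊗[K] W) (R12op K U V W S * A)) := by
  refine BaxterAux.end_induction K U V ?_ ?_ ?_ ?_
  · intro a b
    refine BaxterAux.end_induction K U (V ⊗[K] W) ?_ ?_ ?_ ?_
    · intro φ C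
      rw [R12op_map, BaxterAux.mapMul, BaxterAux.mapMul, BaxterAux.ptr_map, BaxterAux.ptr_map,
        map_smul, map_smul, LinearMap.trace_mul_comm, BaxterAux.tr_cyc trV htrV b C]
    · simp
    · intro x y hx hy
      rw [add_mul, mul_add, map_add, map_add, map_add, map_add, hx, hy]
    · intro c x hx
      rw [smul_mul_assoc, mul_smul_comm, map_smul, map_smul, map_smul, map_smul, hx]
  · intro A
    rw [R12op_zero, mul_zero, zero_mul]
  · intro a b ha hb A
    rw [R12op_add, mul_add, add_mul, map_add, map_add, map_add, map_add, ha, hb]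
  · intro c a ha A
    rw [R12op_smul, mul_smul_comm, smul_mul_assoc, map_smul, map_smul, map_smul, map_smul, ha]

end RopLemmas

/-- **Commutativity of Baxter transfer operators.**  Let `U, V, W` be finite-dimensional
vector spaces over a field `K`.  Suppose `R_{UV} ∈ End(U ⊗ V)` is invertible, the operators
`R_{UV}, R_{UW}, R_{VW}` satisfy the Yang–Baxter equation
`R_{UV,12} R_{UW,13} R_{VW,23} = R_{VW,23} R_{UW,13} R_{UV,12}` on `U ⊗ V ⊗ W`, and
`m_U ∈ End U`, `m_V ∈ End V` satisfy `(m_U ⊗ m_V) R_{UV} = R_{UV} (m_U ⊗ m_V)`.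
Then the transfer operators `T_U = tr_U((m_U ⊗ id_W) R_{UW})` and
`T_V = tr_V((m_V ⊗ id_W) R_{VW})` commute in `End(W)`.  (Here `tr_X` denotes the partial
trace, characterized by `tr_X(φ ⊗ ψ) = tr(φ) ψ`.) -/


theorem baxter_transfer_commute [FiniteDimensional K U] [FiniteDimensional K V]
    [FiniteDimensional K W]
    (R_UV : Module.End K (U ⊗[K] V)) (R_UW : Module.End K (U ⊗[K] W))
    (R_VW : Module.End K (V ⊗[K] W))
    (hinv : IsUnit R_UV)
    (hYBE : R12op K U V W R_UV * R13op K U V W R_UW * R23op K U V W R_VW =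
      R23op K U V W R_VW * R13op K U V W R_UW * R12op K U V W R_UV)
    (mU : Module.End K U) (mV : Module.End K V)
    (hm : TensorProduct.map mU mV * R_UV = R_UV * TensorProduct.map mU mV)
    (trU : Module.End K (U ⊗[K] W) →ₗ[K] Module.End K W)
    (htrU : ∀ (φ : Module.End K U) (ψ : Module.End K W),
      trU (TensorProduct.map φ ψ) = LinearMap.trace K U φ • ψ)
    (trV : Module.End K (V ⊗[K] W) →ₗ[K] Module.End K W)
    (htrV : ∀ (φ : Module.End K V) (ψ : Module.End K W),
      trV (TensorProduct.map φ ψ) = LinearMap.trace K V φ • ψ) :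
    trU (TensorProduct.map mU (LinearMap.id : W →ₗ[K] W) * R_UW) *
        trV (TensorProduct.map mV (LinearMap.id : W →ₗ[K] W) * R_VW) =
      trV (TensorProduct.map mV (LinearMap.id : W →ₗ[K] W) * R_VW) *
        trU (TensorProduct.map mU (LinearMap.id : W →ₗ[K] W) * R_UW) := by
  simp only [← Module.End.one_eq_id]
  obtain ⟨uu, hu⟩ := hinv
  set R12 := R12op K U V W R_UV with hR12def
  set R13 := R13op K U V W R_UW with hR13def
  set R23 := R23op K U V W R_VW with hR23def
  set S12 := R12op K U V W ↑uu⁻¹ with hS12def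
  set M1 : Module.End K (U ⊗[K] (V ⊗[K] W)) :=
    TensorProduct.map mU (1 : Module.End K (V ⊗[K] W)) with hM1def
  set M2 : Module.End K (U ⊗[K] (V ⊗[K] W)) :=
    TensorProduct.map (1 : Module.End K U)
      (TensorProduct.map mV (1 : Module.End K W)) with hM2def
  set Mf : Module.End K (U ⊗[K] (V ⊗[K] W)) :=
    TensorProduct.map mU (TensorProduct.map mV (1 : Module.End K W)) with hMfdef
  -- inverse relations
  have hs : S12 * R12 = 1 := by
    rw [hS12def, hR12def, ← R12op_mul, ← hu, Units.inv_mul, R12op_one]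
  have hs' : R12 * S12 = 1 := by
    rw [hS12def, hR12def, ← R12op_mul, ← hu, Units.mul_inv, R12op_one]
  -- decompositions of the two big operators
  have haP : R13op K U V W (TensorProduct.map mU (1 : Module.End K W) * R_UW) =
      M1 * R13 := by
    rw [R13op_mul, R13op_map, BaxterAux.map_one_one, hM1def, hR13def]
  have hbQ : R23op K U V W (TensorProduct.map mV (1 : Module.End K W) * R_VW) =
      M2 * R23 := by
    rw [hM2def, hR23def, R23op_eq, R23op_eq, BaxterAux.mapMul, one_mul]
  -- commutation facts
  have assoc_comm : ∀ {x y : Module.End K (U ⊗[K] (V ⊗[K] W))}, x * y = y * x →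
      ∀ z, x * (y * z) = y * (x * z) := by
    intro x y h z
    rw [← mul_assoc, h, mul_assoc]
  have hc1 : M2 * R13 = R13 * M2 := R13op_comm_mid K U V W mV R_UW
  have hc2 : M1 * R23 = R23 * M1 := by
    rw [hM1def, hR23def, R23op_eq]
    simp [BaxterAux.mapMul]
  have hM : M1 * M2 = Mf := by
    rw [hM1def, hM2def, hMfdef, BaxterAux.mapMul, mul_one, one_mul]
  have hM' : M2 * M1 = Mf := by
    rw [hM1def, hM2def, hMfdef, BaxterAux.mapMul, mul_one, one_mul]
  have hMfR12 : Mf * R12 = R12 * Mf := by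
    rw [hMfdef, hR12def, ← R12op_map, ← R12op_mul, hm, R12op_mul, R12op_map]
  have hMfS12 : Mf * S12 = S12 * Mf := by
    calc Mf * S12 = S12 * R12 * (Mf * S12) := by rw [hs, one_mul]
      _ = S12 * (R12 * Mf) * S12 := by
          rw [mul_assoc, mul_assoc, mul_assoc]
      _ = S12 * (Mf * R12) * S12 := by rw [hMfR12]
      _ = S12 * Mf * (R12 * S12) := by rw [mul_assoc, mul_assoc, mul_assoc]
      _ = S12 * Mf := by rw [hs', mul_one]
  have hy' : R12 * (R13 * R23) = R23 * (R13 * R12) := by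
    simpa only [mul_assoc] using hYBE
  -- the key operator identities
  have key1 : R13op K U V W (TensorProduct.map mU (1 : Module.End K W) * R_UW) *
      R23op K U V W (TensorProduct.map mV (1 : Module.End K W) * R_VW) =
      S12 * (R23op K U V W (TensorProduct.map mV (1 : Module.End K W) * R_VW) *
        (R13op K U V W (TensorProduct.map mU (1 : Module.End K W) * R_UW) * R12)) := by
    rw [haP, hbQ]
    simp only [mul_assoc]
    rw [← assoc_comm hc1 R23, ← assoc_comm hc2 (R13 * R12),
      ← mul_assoc M1 M2, hM, ← mul_assoc M2 M1, hM', ← hy',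
      assoc_comm hMfS12.symm (R12 * (R13 * R23)), ← mul_assoc S12 R12, hs, one_mul]
  have key2 : (R23op K U V W (TensorProduct.map mV (1 : Module.End K W) * R_VW) *
      (R13op K U V W (TensorProduct.map mU (1 : Module.End K W) * R_UW) * R12)) * S12 =
      R23op K U V W (TensorProduct.map mV (1 : Module.End K W) * R_VW) *
        R13op K U V W (TensorProduct.map mU (1 : Module.End K W) * R_UW) := by
    simp only [mul_assoc]
    rw [hs', mul_one]
  -- assemble
  calc trU (TensorProduct.map mU (1 : Module.End K W) * R_UW) *
        trV (TensorProduct.map mV (1 : Module.End K W) * R_VW)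
      = trV (BaxterAux.ptr K U (V ⊗[K] W)
          (R13op K U V W (TensorProduct.map mU (1 : Module.End K W) * R_UW) *
            R23op K U V W (TensorProduct.map mV (1 : Module.End K W) * R_VW))) :=
        (step_left K U V W trU htrU trV htrV _ _).symm
    _ = trV (BaxterAux.ptr K U (V ⊗[K] W)
          ((R23op K U V W (TensorProduct.map mV (1 : Module.End K W) * R_VW) *
            (R13op K U V W (TensorProduct.map mU (1 : Module.End K W) * R_UW) * R12)) *
            S12)) := by
        rw [key1, hS12def]
        exact (T_cyc K U V W trV htrV ↑uu⁻¹ _).symm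
    _ = trV (BaxterAux.ptr K U (V ⊗[K] W)
          (R23op K U V W (TensorProduct.map mV (1 : Module.End K W) * R_VW) *
            R13op K U V W (TensorProduct.map mU (1 : Module.End K W) * R_UW))) := by
        rw [key2]
    _ = trV (TensorProduct.map mV (1 : Module.End K W) * R_VW) *
        trU (TensorProduct.map mU (1 : Module.End K W) * R_UW) :=
        step_right K U V W trU htrU trV htrV _ _


end
end

section
/- Let $A$ be a commutative ring in which $2$ is invertible, $V$ an $A$-module, and $r \in \mathrm{End}(V\otimes V)$ a symmetric operator, i.e. $\sigma \circ r \circ \sigma = r$ where $\sigma$ is the flip of the two tensor factors. On $V^{\otimes 3}$ set $r_{12} := r\otimes\mathrm{id}$, $r_{23} := \mathrm{id}\otimes r$, and $r_{13} := \sigma_{23}\, r_{12}\, \sigma_{23}$, where $\sigma_{23} = \mathrm{id}\otimes\sigma$. If $r$ satisfies the classical Yang–Baxter equation $[r_{12}, r_{13}] + [r_{12}, r_{23}] + [r_{13}, r_{23}] = 0$, then $[\,r_{12} + r_{13},\; r_{23}\,] = 0$ (equivalently, $[r_{12}, r_{13}] = 0$). -/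
/-!
For a symmetric solution `r` of the classical Yang–Baxter equation,
`[r₁₂ + r₁₃, r₂₃] = 0`.
-/

open scoped TensorProduct

noncomputable section

variable (A : Type*) [CommRing A] (V : Type*) [AddCommGroup V] [Module A V]

/-- The flip `σ` of the two tensor factors of `V ⊗ V`. -/
def flipOp : Module.End A (V ⊗[A] V) := (TensorProduct.comm A V V).toLinearMap

/-- `r₁₂ = r ⊗ id` acting on factors 1 and 2 of `V^{⊗3} = V ⊗ (V ⊗ V)`. -/
def r12op (r : Module.End A (V ⊗[A] V)) : Module.End A (V ⊗[A] (V ⊗[A] V)) :=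
  (TensorProduct.assoc A V V V).toLinearMap ∘ₗ
    LinearMap.rTensor V r ∘ₗ (TensorProduct.assoc A V V V).symm.toLinearMap

/-- `r₂₃ = id ⊗ r` acting on factors 2 and 3 of `V^{⊗3} = V ⊗ (V ⊗ V)`. -/
def r23op (r : Module.End A (V ⊗[A] V)) : Module.End A (V ⊗[A] (V ⊗[A] V)) :=
  LinearMap.lTensor V r

/-- `σ₂₃ = id ⊗ σ`. -/
def sigma23 : Module.End A (V ⊗[A] (V ⊗[A] V)) := LinearMap.lTensor V (flipOp A V)

/-- `r₁₃ = σ₂₃ r₁₂ σ₂₃`. -/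
def r13op (r : Module.End A (V ⊗[A] V)) : Module.End A (V ⊗[A] (V ⊗[A] V)) :=
  sigma23 A V * r12op A V r * sigma23 A V

/-- **Symmetric classical r-matrices have commuting mixed terms.**  Let `A` be a commutative
ring in which `2` is invertible, `V` an `A`-module, and `r ∈ End(V ⊗ V)` symmetric, i.e.
`σ ∘ r ∘ σ = r` for the flip `σ`.  If `r` satisfies the classical Yang–Baxter equation
`[r₁₂, r₁₃] + [r₁₂, r₂₃] + [r₁₃, r₂₃] = 0`, then `[r₁₂ + r₁₃, r₂₃] = 0`. -/
theorem symmetric_cybe_commute [Invertible (2 : A)] (r : Module.End A (V ⊗[A] V))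
    (hsym : flipOp A V ∘ₗ r ∘ₗ flipOp A V = r)
    (hCYB : ⁅r12op A V r, r13op A V r⁆ + ⁅r12op A V r, r23op A V r⁆ +
        ⁅r13op A V r, r23op A V r⁆ = 0) :
    ⁅r12op A V r + r13op A V r, r23op A V r⁆ = 0 := by
  set S := sigma23 A V with hS
  set a := r12op A V r
  set b := r13op A V r
  set c := r23op A V r
  have liedef : ∀ x y : Module.End A (V ⊗[A] (V ⊗[A] V)), ⁅x, y⁆ = x * y - y * x :=
    fun _ _ => rfl
  have hflip2 : flipOp A V ∘ₗ flipOp A V = LinearMap.id := by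
    ext x y
    simp [flipOp]
  have hS2 : S * S = 1 := by
    show sigma23 A V * sigma23 A V = 1
    unfold sigma23
    rw [Module.End.mul_eq_comp, ← LinearMap.lTensor_comp, hflip2]
    exact LinearMap.lTensor_id V _
  have hb : S * a * S = b := rfl
  have ha : S * b * S = a := by
    show S * (S * a * S) * S = a
    have h1 : S * (S * a * S) * S = (S * S) * a * (S * S) := by noncomm_ring
    rw [h1, hS2, one_mul, mul_one]
  have hc : S * c * S = c := by
    show sigma23 A V * r23op A V r * sigma23 A V = r23op A V r
    unfold sigma23 r23op
    rw [Module.End.mul_eq_comp, Module.End.mul_eq_comp, ← LinearMap.lTensor_comp,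
      ← LinearMap.lTensor_comp, LinearMap.comp_assoc, hsym]
  have conj : ∀ x y : Module.End A (V ⊗[A] (V ⊗[A] V)),
      S * ⁅x, y⁆ * S = ⁅S * x * S, S * y * S⁆ := by
    intro x y
    simp only [liedef]
    have h1 : (S * x * S) * (S * y * S) = S * (x * y) * S := by
      have : (S * x * S) * (S * y * S) = S * x * (S * S) * (y * S) := by noncomm_ring
      rw [this, hS2, mul_one]; noncomm_ring
    have h2 : (S * y * S) * (S * x * S) = S * (y * x) * S := by
      have : (S * y * S) * (S * x * S) = S * y * (S * S) * (x * S) := by noncomm_ring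
      rw [this, hS2, mul_one]; noncomm_ring
    rw [h1, h2, mul_sub S (x * y) (y * x), sub_mul (S * (x * y)) (S * (y * x)) S]
  have hCYB2 : ⁅b, a⁆ + ⁅b, c⁆ + ⁅a, c⁆ = 0 := by
    have h := congrArg (fun x => S * x * S) hCYB
    simp only [mul_add, add_mul, conj, ha, hb, hc, mul_zero, zero_mul] at h
    exact h
  have hskew : ⁅a, b⁆ + ⁅b, a⁆ = 0 := by
    simp only [liedef]; abel
  have h := congrArg₂ (· + ·) hCYB hCYB2
  simp only [add_zero] at h
  have hre : ⁅a, b⁆ + ⁅a, c⁆ + ⁅b, c⁆ + (⁅b, a⁆ + ⁅b, c⁆ + ⁅a, c⁆) =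
      ⁅a, b⁆ + ⁅b, a⁆ + (⁅a, c⁆ + ⁅b, c⁆ + (⁅a, c⁆ + ⁅b, c⁆)) := by abel
  rw [hre, hskew, zero_add] at h
  have h2 : algebraMap A (Module.End A (V ⊗[A] (V ⊗[A] V))) 2 = 2 := map_ofNat _ 2
  have h2inv : Invertible (2 : Module.End A (V ⊗[A] (V ⊗[A] V))) :=
    h2 ▸ Invertible.map (algebraMap A _) 2
  have hx : (2 : Module.End A (V ⊗[A] (V ⊗[A] V))) * (⁅a, c⁆ + ⁅b, c⁆) = 0 := by
    rw [two_mul]; exact h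
  have hzero : ⁅a, c⁆ + ⁅b, c⁆ = 0 := by
    have h3 := congrArg (fun z => ⅟(2 : Module.End A (V ⊗[A] (V ⊗[A] V))) * z) hx
    simpa [← mul_assoc, invOf_mul_self] using h3
  calc ⁅a + b, c⁆ = ⁅a, c⁆ + ⁅b, c⁆ := by simp only [liedef, add_mul, mul_add]; abel
    _ = 0 := hzero

end
end

section
/- Let $K$ be a field, $d \ge 1$ an integer, and $\alpha \in \mathbb{N}^d$ nonzero. For each $v \in \mathbb{Z}^d$ let $M_v$ be a finite-dimensional $K$-vector space with $M_v = 0$ unless $v \in \mathbb{N}^d$, and let $e_v : M_v \to M_{v+\alpha}$ and $f_v : M_v \to M_{v-\alpha}$ be $K$-linear maps. Assume that for every $v$ there is a scalar $c_v \in K$ with $e_{v-\alpha}\circ f_v - f_{v+\alpha}\circ e_v = c_v\cdot\mathrm{id}_{M_v}$. Then in the formal power series ring $K[[q_1,\dots,q_d]]$ one has $(1 - q^{\alpha})\,\sum_{v\in\mathbb{N}^d} \mathrm{tr}\big(e_{v-\alpha}\circ f_v\big)\, q^{v} \;=\; -\,q^{\alpha}\,\sum_{v\in\mathbb{N}^d}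 c_v\, (\dim_K M_v)\, q^{v}$, where $q^{v} := \prod_{i=1}^d q_i^{v_i}$. -/
/-!
A graded-trace identity: if operators `e`, `f` shift a `ℤ^d`-graded family of
finite-dimensional spaces by `±α` and their commutator is scalar on each graded piece,
then `(1 - q^α) ∑_v tr(e_{v-α} f_v) q^v = -q^α ∑_v c_v dim(M_v) q^v` in `K[[q₁,…,q_d]]`.
-/

noncomputable section

/-- The formal power series `∑_{v ∈ ℕ^d} f(v) q^v` with coefficient function `f`. -/
def seriesOf {K : Type*} [Field K] {d : ℕ} (f : (Fin d →₀ ℕ) → K) :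
    MvPowerSeries (Fin d) K := f

theorem graded_trace_identity {K : Type*} [Field K] {d : ℕ} (hd : 1 ≤ d)
    (α : Fin d → ℕ) (hα : α ≠ 0)
    {Amb : Type*} [AddCommGroup Amb] [Module K Amb]
    (M : (Fin d → ℤ) → Submodule K Amb)
    [∀ v, FiniteDimensional K (M v)]
    (hM0 : ∀ v, (¬ ∀ i, 0 ≤ v i) → M v = ⊥)
    (E F : Amb →ₗ[K] Amb)
    (hE : ∀ v, ∀ x ∈ M v, E x ∈ M (v + fun i => (α i : ℤ)))
    (hF : ∀ v, ∀ x ∈ M v, F x ∈ M (v - fun i => (α i : ℤ)))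
    (hEF : ∀ v, ∀ x ∈ M v, (E ∘ₗ F) x ∈ M v)
    (c : (Fin d → ℤ) → K)
    (hcomm : ∀ v, ∀ x ∈ M v, E (F x) - F (E x) = c v • x) :
    (1 - MvPowerSeries.monomial (R := K) (Finsupp.equivFunOnFinite.symm α) 1) *
        seriesOf (fun v : Fin d →₀ ℕ =>
          LinearMap.trace K ↥(M fun i => (v i : ℤ))
            ((E ∘ₗ F).restrict (hEF fun i => (v i : ℤ))))
      = -(MvPowerSeries.monomial (R := K) (Finsupp.equivFunOnFinite.symm α) 1) *
          seriesOf (fun v : Fin d →₀ ℕ =>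
            c (fun i => (v i : ℤ)) *
              (Module.finrank K ↥(M fun i => (v i : ℤ)) : K)) := by
  classical
  have hF' : ∀ v : Fin d → ℤ, ∀ x ∈ M (v + fun i => (α i : ℤ)), F x ∈ M v := by
    intro v x hx
    have h := hF (v + fun i => (α i : ℤ)) x hx
    have hveq : ((v + fun i => (α i : ℤ)) - fun i => (α i : ℤ)) = v := by
      funext i; simp
    rwa [hveq] at h
  have hFE : ∀ v : Fin d → ℤ, ∀ x ∈ M v, (F ∘ₗ E) x ∈ M v := by
    intro v x hx
    exact hF' v (E x) (hE v x hx)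
  -- commutator trace identity on each piece
  have key2 : ∀ v : Fin d → ℤ,
      LinearMap.trace K (M v) ((E ∘ₗ F).restrict (hEF v)) -
      LinearMap.trace K (M v) ((F ∘ₗ E).restrict (hFE v)) =
      c v * (Module.finrank K (M v) : K) := by
    intro v
    have hres : (E ∘ₗ F).restrict (hEF v) - (F ∘ₗ E).restrict (hFE v)
        = c v • (LinearMap.id : M v →ₗ[K] M v) := by
      ext x
      have := hcomm v (x : Amb) x.2
      simpa [LinearMap.restrict_apply] using this
    have := congrArg (LinearMap.trace K (M v)) hres
    rw [map_sub, map_smul] at this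
    simpa [LinearMap.trace_id, smul_eq_mul] using this
  -- cyclicity of trace
  have key3 : ∀ v : Fin d → ℤ,
      LinearMap.trace K (M v) ((F ∘ₗ E).restrict (hFE v)) =
      LinearMap.trace K (M (v + fun i => (α i : ℤ)))
        ((E ∘ₗ F).restrict (hEF (v + fun i => (α i : ℤ)))) := by
    intro v
    set a : M v →ₗ[K] M (v + fun i => (α i : ℤ)) := E.restrict (hE v) with ha
    set b : M (v + fun i => (α i : ℤ)) →ₗ[K] M v := F.restrict (hF' v) with hb
    have h1 : (F ∘ₗ E).restrict (hFE v) = b ∘ₗ a := by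
      ext x
      simp [ha, hb, LinearMap.restrict_apply]
    have h2 : (E ∘ₗ F).restrict (hEF (v + fun i => (α i : ℤ))) = a ∘ₗ b := by
      ext x
      simp [ha, hb, LinearMap.restrict_apply]
    rw [h1, h2, LinearMap.trace_comp_comm']
  -- vanishing when v - α has a negative coordinate
  have key4 : ∀ v : Fin d → ℤ, (¬ ∀ i, (0:ℤ) ≤ v i - α i) →
      LinearMap.trace K (M v) ((E ∘ₗ F).restrict (hEF v)) = 0 := by
    intro v hv
    have hbot : M (v - fun i => (α i : ℤ)) = ⊥ := by
      apply hM0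
      intro h
      exact hv fun i => by simpa using h i
    have hzero : (E ∘ₗ F).restrict (hEF v) = 0 := by
      ext x
      have hFx : F (x : Amb) ∈ M (v - fun i => (α i : ℤ)) := hF v x x.2
      rw [hbot] at hFx
      have hFx0 : F (x : Amb) = 0 := by simpa using hFx
      simp [LinearMap.restrict_apply, hFx0]
    rw [hzero, map_zero]
  -- compare coefficients
  apply MvPowerSeries.ext
  intro n
  set A : Fin d →₀ ℕ := Finsupp.equivFunOnFinite.symm α with hA
  have hAco : ∀ i, A i = α i := fun i => rfl
  have hcoS : ∀ f : (Fin d →₀ ℕ) → K, ∀ m : Fin d →₀ ℕ,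
      MvPowerSeries.coeff (R := K) m (seriesOf f) = f m := fun f m => rfl
  rw [sub_mul, one_mul, neg_mul, map_sub, map_neg,
    MvPowerSeries.coeff_monomial_mul, MvPowerSeries.coeff_monomial_mul, hcoS]
  by_cases hle : A ≤ n
  · rw [if_pos hle, if_pos hle, hcoS, hcoS, one_mul, one_mul]
    have hle' : ∀ i, A i ≤ n i := fun i => hle i
    have hw : ((fun i => (((n - A) i : ℕ) : ℤ)) + fun i => (α i : ℤ))
        = fun i => ((n i : ℕ) : ℤ) := by
      funext i
      simp only [Pi.add_apply, Finsupp.tsub_apply]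
      rw [hAco]
      have h : α i ≤ n i := hle' i
      omega
    have h2 := key2 (fun i => (((n - A) i : ℕ) : ℤ))
    have h3 := key3 (fun i => (((n - A) i : ℕ) : ℤ))
    rw [hw] at h3
    rw [h3] at h2
    linear_combination -h2
  · rw [if_neg hle, if_neg hle, sub_zero, neg_zero]
    apply key4
    intro hcontra
    apply hle
    intro i
    have := hcontra i
    have : (α i : ℤ) ≤ (n i : ℤ) := by omega
    exact_mod_cast (hAco i ▸ this : ((A i : ℤ)) ≤ (n i : ℤ))

end
end

section
/- Let $K$ be a commutative ring, $t$ an indeterminate, $m \ge 1$, and $d_1,\dots,d_m \ge 1$ with $N = \sum_k d_k$. Regard $N\times N$ matrices over $K[[t]]$ in $m\times m$ block form with block sizes $d_1,\dots,d_m$. Let $U$, $R$, $S$ be such matrices satisfying: $U_{ij} = 0$ for $i < j$ (block lower triangular), $S_{ij} = 0$ for $i > j$ (block upper triangular), $U \equiv R \equiv S \equiv I_N \pmod{t}$, and $U\,R = S$. Then for every $k$ the diagonal block $U_{kk}$ is invertible in $M_{d_k}(K[[t]])$, and $U_{kk}^{-1} S_{kk} \;\equiv\; R_{kk} \;-\;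 \sum_{i<k} R_{ki}\, R_{ik} \pmod{t^3}$. -/
/-!
Block Gauss factorization through order `t³`: if `U R = S` with `U` block lower
triangular, `S` block upper triangular, all three congruent to the identity mod `t`,
then each diagonal block `U_{kk}` is invertible and
`U_{kk}⁻¹ S_{kk} ≡ R_{kk} - ∑_{i<k} R_{ki} R_{ik} (mod t³)`.
-/

noncomputable section

/-- Entrywise congruence `A ≡ B (mod tʳ)` for (rectangular) matrices over `K[[t]]`. -/
def MatCong {K : Type*} [CommRing K] {a b : Type*} (r : ℕ)
    (A B : Matrix a b (PowerSeries K)) : Prop :=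
  ∀ p q, (PowerSeries.X : PowerSeries K) ^ r ∣ (A p q - B p q)

/-- Entrywise divisibility by `tʳ`. -/
def MatDvd {K : Type*} [CommRing K] {a b : Type*} (r : ℕ)
    (A : Matrix a b (PowerSeries K)) : Prop :=
  ∀ p q, (PowerSeries.X : PowerSeries K) ^ r ∣ A p q

namespace MatDvd

variable {K : Type*} [CommRing K] {a b c : Type*}

theorem sub {r : ℕ} {A B : Matrix a b (PowerSeries K)} (hA : MatDvd r A) (hB : MatDvd r B) :
    MatDvd r (A - B) := fun p q => by
  simpa [Matrix.sub_apply] using dvd_sub (hA p q) (hB p q)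

theorem neg {r : ℕ} {A : Matrix a b (PowerSeries K)} (hA : MatDvd r A) :
    MatDvd r (-A) := fun p q => by
  simpa [Matrix.neg_apply] using (hA p q).neg_right

theorem sum {r : ℕ} {ι : Type*} {s : Finset ι} {f : ι → Matrix a b (PowerSeries K)}
    (h : ∀ i ∈ s, MatDvd r (f i)) : MatDvd r (∑ i ∈ s, f i) := fun p q => by
  rw [Matrix.sum_apply]
  exact Finset.dvd_sum fun i hi => h i hi p q

theorem mul [Fintype b] {r s : ℕ} {A : Matrix a b (PowerSeries K)}
    {B : Matrix b c (PowerSeries K)} (hA : MatDvd r A) (hB : MatDvd s B) :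
    MatDvd (r + s) (A * B) := fun p q => by
  rw [Matrix.mul_apply, pow_add]
  exact Finset.dvd_sum fun j _ => mul_dvd_mul (hA p j) (hB j q)

theorem mul_left [Fintype b] {r : ℕ} (A : Matrix a b (PowerSeries K))
    {B : Matrix b c (PowerSeries K)} (hB : MatDvd r B) :
    MatDvd r (A * B) := fun p q => by
  rw [Matrix.mul_apply]
  exact Finset.dvd_sum fun j _ => (hB j q).mul_left _

end MatDvd

theorem matCong_iff_matDvd {K : Type*} [CommRing K] {a b : Type*} {r : ℕ}
    {A B : Matrix a b (PowerSeries K)} : MatCong r A B ↔ MatDvd r (A - B) := Iff.rfl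

/-- **Diagonal blocks of a block Gauss factorization, through order `t²`.**
Let `K` be a commutative ring, and regard `N×N` matrices over `K[[t]]` in `m×m` block
form with block sizes `d₁, …, d_m ≥ 1`.  Let `U`, `R`, `S` be such matrices with `U`
block lower triangular, `S` block upper triangular, `U ≡ R ≡ S ≡ I (mod t)`, and
`U R = S`.  Then every diagonal block `U_{kk}` is invertible in `M_{d_k}(K[[t]])` and
`U_{kk}⁻¹ S_{kk} ≡ R_{kk} - ∑_{i<k} R_{ki} R_{ik} (mod t³)`. -/
theorem block_gauss_diagonal {K : Type*} [CommRing K] {m : ℕ} (hm : 1 ≤ m)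
    (d : Fin m → ℕ) (hd : ∀ k, 1 ≤ d k)
    (U R S : ∀ i j : Fin m, Matrix (Fin (d i)) (Fin (d j)) (PowerSeries K))
    (hUtri : ∀ i j, i < j → U i j = 0)
    (hStri : ∀ i j, j < i → S i j = 0)
    (hU1 : ∀ i, MatCong 1 (U i i) 1) (hU0 : ∀ i j, i ≠ j → MatCong 1 (U i j) 0)
    (hR1 : ∀ i, MatCong 1 (R i i) 1) (hR0 : ∀ i j, i ≠ j → MatCong 1 (R i j) 0)
    (hS1 : ∀ i, MatCong 1 (S i i) 1) (hS0 : ∀ i j, i ≠ j → MatCong 1 (S i j) 0)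
    (hmul : ∀ i j, ∑ k, U i k * R k j = S i j)
    (k : Fin m) :
    IsUnit (U k k) ∧
      MatCong 3 (Ring.inverse (U k k) * S k k)
        (R k k - ∑ i ∈ Finset.univ.filter (fun i => i < k), R k i * R i k) := by
  classical
  set T : Finset (Fin m) := Finset.univ.filter (fun i => i < k) with hT
  -- Convenient divisibility facts
  have hU0' : ∀ i j, i ≠ j → MatDvd 1 (U i j) := by
    intro i j hij p q
    simpa using hU0 i j hij p q
  have hR0' : ∀ i j, i ≠ j → MatDvd 1 (R i j) := by
    intro i j hij p q
    simpa using hR0 i j hij p q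
  have hR1' : ∀ i, MatDvd 1 ((1 : Matrix (Fin (d i)) (Fin (d i)) (PowerSeries K)) - R i i) := by
    intro i p q
    simpa using (hR1 i p q).neg_right
  -- invertibility of U k k
  have hUunit : IsUnit (U k k) := by
    rw [Matrix.isUnit_iff_isUnit_det]
    rw [PowerSeries.isUnit_iff_constantCoeff]
    have hmap : (U k k).map (PowerSeries.constantCoeff (R := K)) = 1 := by
      ext p q
      obtain ⟨c, hc⟩ := hU1 k p q
      have : U k k p q = (1 : Matrix (Fin (d k)) (Fin (d k)) (PowerSeries K)) p q
          + PowerSeries.X ^ 1 * c := by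
        rw [← hc]; ring
      simp only [Matrix.map_apply, this, map_add, map_mul, map_pow,
        PowerSeries.constantCoeff_X, pow_one, zero_mul, add_zero]
      by_cases h : p = q <;> simp [Matrix.one_apply, h]
    have := RingHom.map_det (PowerSeries.constantCoeff (R := K)) (U k k)
    rw [this, RingHom.mapMatrix_apply, hmap, Matrix.det_one]
    exact isUnit_one
  refine ⟨hUunit, ?_⟩
  have hVU : Ring.inverse (U k k) * U k k = 1 := Ring.inverse_mul_cancel _ hUunit
  -- splitting the product sums
  have hsum : ∀ q, S k q = U k k * R k q + ∑ i ∈ T, U k i * R i q := by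
    intro q
    rw [← hmul k q,
      ← Finset.sum_filter_add_sum_filter_not Finset.univ (fun i => i < k)
        (fun i => U k i * R i q)]
    have h2 : ∑ i ∈ Finset.univ.filter (fun i => ¬ i < k), U k i * R i q
        = U k k * R k q := by
      apply Finset.sum_eq_single_of_mem k (by simp)
      intro i hi hne
      have hki : k < i := lt_of_le_of_ne (not_lt.mp (by simpa using hi)) (Ne.symm hne)
      rw [hUtri k i hki, Matrix.zero_mul]
    rw [h2, add_comm]
  -- order-t² description of the subdiagonal blocks of U
  have hstepC : ∀ j ∈ T, MatDvd 2 (U k j + U k k * R k j) := by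
    intro j hj
    have hjk : j < k := by simpa [hT] using hj
    have hjk' : j ≠ k := ne_of_lt hjk
    have h0 : (0 : Matrix (Fin (d k)) (Fin (d j)) (PowerSeries K))
        = U k k * R k j + ∑ i ∈ T, U k i * R i j := by
      rw [← hsum j, hStri k j hjk]
    rw [← Finset.add_sum_erase T (fun i => U k i * R i j) hj] at h0
    have h1 : U k k * R k j
        = -(U k j * R j j) - ∑ i ∈ T.erase j, U k i * R i j := by
      have := h0.symm
      rw [add_comm] at this
      have h2 := eq_neg_of_add_eq_zero_left this
      have h3 : U k k * R k j
          = -(U k j * R j j + ∑ i ∈ T.erase j, U k i * R i j) := by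
        rw [h2, neg_neg]
      rw [h3]; abel
    have e : U k j + U k k * R k j
        = U k j * ((1 : Matrix (Fin (d j)) (Fin (d j)) (PowerSeries K)) - R j j)
          - ∑ i ∈ T.erase j, U k i * R i j := by
      rw [Matrix.mul_sub, Matrix.mul_one, h1]; abel
    rw [e]
    refine MatDvd.sub (MatDvd.mul (hU0' k j (Ne.symm hjk')) (hR1' j)) ?_
    have h12 : (2 : ℕ) = 1 + 1 := rfl
    rw [h12]
    refine MatDvd.sum fun i hi => ?_
    have hij : i ≠ j := (Finset.mem_erase.mp hi).1
    have hik : i < k := by simpa [hT] using (Finset.mem_erase.mp hi).2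
    exact MatDvd.mul (hU0' k i (Ne.symm (ne_of_lt hik))) (hR0' i j hij)
  -- the main order-t³ statement
  have hmain : MatDvd 3 (S k k - U k k * (R k k - ∑ i ∈ T, R k i * R i k)) := by
    have e2 : S k k - U k k * (R k k - ∑ i ∈ T, R k i * R i k)
        = ∑ i ∈ T, (U k i + U k k * R k i) * R i k := by
      have hterm : ∀ i ∈ T, (U k i + U k k * R k i) * R i k
          = U k i * R i k + U k k * (R k i * R i k) := by
        intro i _
        rw [Matrix.add_mul, Matrix.mul_assoc]
      rw [Finset.sum_congr rfl hterm, Finset.sum_add_distrib, hsum k, Matrix.mul_sub,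
        Matrix.mul_sum]
      abel
    rw [e2]
    have h21 : (3 : ℕ) = 2 + 1 := rfl
    rw [h21]
    refine MatDvd.sum fun i hi => ?_
    have hik : i < k := by simpa [hT] using hi
    exact MatDvd.mul (hstepC i hi) (hR0' i k (ne_of_lt hik))
  -- conclude
  rw [matCong_iff_matDvd]
  have e3 : Ring.inverse (U k k) * S k k - (R k k - ∑ i ∈ T, R k i * R i k)
      = Ring.inverse (U k k) * (S k k - U k k * (R k k - ∑ i ∈ T, R k i * R i k)) := by
    rw [Matrix.mul_sub, ← Matrix.mul_assoc, hVU, Matrix.one_mul]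
  rw [e3]
  exact MatDvd.mul_left _ hmain

end
end

section
/- Let $n \ge 1$ and let $S \in M_n(\mathbb{R})$ be a symmetric matrix. Then the matrix $C(t) := (1+t^2)\,I_n - t\,S$, regarded over the field $\mathbb{C}(t)$ of rational functions, is invertible, and every entry of $C(t)^{-1}$ has a pole of order at most $2$ at every point $z \in \mathbb{C}$; that is, for each $i,j$ and each $z \in \mathbb{C}$, the rational function $(t-z)^2\,\big(C(t)^{-1}\big)_{ij}$ has no pole at $t = z$. -/
/-!
For a real symmetric matrix `S`, the matrix `C(t) = (1+t²)I - tS` over `ℂ(t)` is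
invertible and every entry of `C(t)⁻¹` has a pole of order at most `2` at every
point `z ∈ ℂ`.
-/

set_option synthInstance.maxHeartbeats 1000000
set_option maxHeartbeats 1000000

noncomputable section

/-- The matrix `C(t) = (1+t²) Iₙ - t S`, with `S` a real matrix, regarded over the field
`ℂ(t)` of rational functions. -/
def Cmat (n : ℕ) (S : Matrix (Fin n) (Fin n) ℝ) : Matrix (Fin n) (Fin n) (RatFunc ℂ) :=
  (1 + (RatFunc.X : RatFunc ℂ) ^ 2) • (1 : Matrix (Fin n) (Fin n) (RatFunc ℂ))
    - (RatFunc.X : RatFunc ℂ) • S.map (fun x => RatFunc.C (x : ℂ))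

namespace CartanPoleAux

open Polynomial Matrix

/-- `f` is regular at `z`: it can be written with a denominator not vanishing at `z`. -/
def Reg (z : ℂ) (f : RatFunc ℂ) : Prop :=
  ∃ p q : ℂ[X], q.eval z ≠ 0 ∧
    f = algebraMap ℂ[X] (RatFunc ℂ) p / algebraMap ℂ[X] (RatFunc ℂ) q

lemma Reg.denom_ne (z : ℂ) {f : RatFunc ℂ} (h : Reg z f) :
    Polynomial.eval z (RatFunc.denom f) ≠ 0 := by
  obtain ⟨p, q, hq, rfl⟩ := h
  have hq0 : q ≠ 0 := by rintro rfl; simp at hq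
  have hdvd : RatFunc.denom (algebraMap ℂ[X] (RatFunc ℂ) p / algebraMap ℂ[X] (RatFunc ℂ) q) ∣ q :=
    (RatFunc.denom_dvd hq0).mpr ⟨p, rfl⟩
  obtain ⟨r, hr⟩ := hdvd
  intro h0
  apply hq
  rw [hr, Polynomial.eval_mul, h0, zero_mul]

lemma reg_zero (z : ℂ) : Reg z 0 :=
  ⟨0, 1, by simp, by simp⟩

lemma reg_add {z : ℂ} {f g : RatFunc ℂ} (hf : Reg z f) (hg : Reg z g) : Reg z (f + g) := by
  obtain ⟨p1, q1, hq1, rfl⟩ := hf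
  obtain ⟨p2, q2, hq2, rfl⟩ := hg
  have h1 : q1 ≠ 0 := by rintro rfl; simp at hq1
  have h2 : q2 ≠ 0 := by rintro rfl; simp at hq2
  refine ⟨p1 * q2 + p2 * q1, q1 * q2, by simp [hq1, hq2], ?_⟩
  rw [div_add_div _ _ (RatFunc.algebraMap_ne_zero h1) (RatFunc.algebraMap_ne_zero h2)]
  congr 1
  · rw [_root_.map_add, _root_.map_mul, _root_.map_mul]; ring
  · rw [_root_.map_mul]

lemma reg_mul {z : ℂ} {f g : RatFunc ℂ} (hf : Reg z f) (hg : Reg z g) : Reg z (f * g) := by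
  obtain ⟨p1, q1, hq1, rfl⟩ := hf
  obtain ⟨p2, q2, hq2, rfl⟩ := hg
  refine ⟨p1 * p2, q1 * q2, by simp [hq1, hq2], ?_⟩
  rw [div_mul_div_comm, _root_.map_mul, _root_.map_mul]

lemma reg_const (z : ℂ) (c : ℂ) : Reg z (RatFunc.C c) :=
  ⟨Polynomial.C c, 1, by simp, by simp [RatFunc.algebraMap_C]⟩

lemma reg_sum {ι : Type*} [DecidableEq ι] {z : ℂ} {s : Finset ι} {f : ι → RatFunc ℂ}
    (h : ∀ k ∈ s, Reg z (f k)) : Reg z (∑ k ∈ s, f k) := by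
  classical
  induction s using Finset.induction_on with
  | empty => simpa using reg_zero z
  | insert _ _ hx ih =>
      rw [Finset.sum_insert hx]
      exact reg_add (h _ (Finset.mem_insert_self _ _))
        (ih fun k hk => h k (Finset.mem_insert_of_mem hk))

/-- The key single-eigenvalue computation: `(X - z)² / Q` is regular at `z`
whenever `Q` is a nonzero polynomial of degree at most `2`. -/
lemma reg_key (z : ℂ) {Q : ℂ[X]} (hQ0 : Q ≠ 0) (hdeg : Q.natDegree ≤ 2) :
    Reg z (((RatFunc.X : RatFunc ℂ) - RatFunc.C z) ^ 2 *
      (algebraMap ℂ[X] (RatFunc ℂ) Q)⁻¹) := by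
  set m := rootMultiplicity z Q with hm
  set R := Q /ₘ (X - Polynomial.C z) ^ m with hR
  have hfact : (X - Polynomial.C z) ^ m * R = Q :=
    Q.pow_mul_divByMonic_rootMultiplicity_eq z
  have hRz : R.eval z ≠ 0 := eval_divByMonic_pow_rootMultiplicity_ne_zero z hQ0
  have hRne : R ≠ 0 := by intro h; rw [h] at hRz; simp at hRz
  have hmle : m ≤ 2 := by
    have hdvd := Q.pow_rootMultiplicity_dvd z
    have := Polynomial.natDegree_le_of_dvd hdvd hQ0
    rw [Polynomial.natDegree_pow, Polynomial.natDegree_X_sub_C, mul_one] at this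
    omega
  refine ⟨(X - Polynomial.C z) ^ (2 - m), R, hRz, ?_⟩
  have hXz : ((RatFunc.X : RatFunc ℂ) - RatFunc.C z) =
      algebraMap ℂ[X] (RatFunc ℂ) (X - Polynomial.C z) := by
    rw [map_sub, RatFunc.algebraMap_X, RatFunc.algebraMap_C]
  rw [hXz, ← map_pow, ← div_eq_mul_inv,
    div_eq_div_iff (RatFunc.algebraMap_ne_zero hQ0) (RatFunc.algebraMap_ne_zero hRne),
    ← _root_.map_mul, ← _root_.map_mul]
  congr 1
  rw [← hfact, ← mul_assoc, ← pow_add, Nat.sub_add_cancel hmle]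

end CartanPoleAux

open CartanPoleAux Polynomial Matrix in
/-- **Inverse of the deformed Cartan matrix has poles of order at most 2.**
Let `S ∈ Mₙ(ℝ)` be symmetric, `n ≥ 1`.  Then `C(t) = (1+t²) Iₙ - t S` is invertible over
`ℂ(t)`, and for each entry and each `z ∈ ℂ`, the rational function
`(t - z)² (C(t)⁻¹)_{ij}` has no pole at `t = z` (its reduced denominator does not vanish
at `z`). -/
theorem cartan_inverse_pole_order (n : ℕ) (hn : 1 ≤ n)
    (S : Matrix (Fin n) (Fin n) ℝ) (hS : S.IsSymm) :
    IsUnit (Cmat n S) ∧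
      ∀ (i j : Fin n) (z : ℂ),
        Polynomial.eval z
            (RatFunc.denom ((RatFunc.X - RatFunc.C z) ^ 2 * (Cmat n S)⁻¹ i j)) ≠ 0 := by
  classical
  -- the complexified matrix is Hermitian
  set Sc : Matrix (Fin n) (Fin n) ℂ := S.map (fun x => (x : ℂ)) with hSc_def
  have hSc : Sc.IsHermitian := by
    ext i j
    simp only [hSc_def, Matrix.conjTranspose_apply, Matrix.map_apply]
    rw [Complex.star_def, Complex.conj_ofReal, hS.apply i j]
  set U : Matrix (Fin n) (Fin n) ℂ := (hSc.eigenvectorUnitary : Matrix (Fin n) (Fin n) ℂ)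
    with hU_def
  set lam : Fin n → ℝ := hSc.eigenvalues with hlam_def
  have hspec : Sc = U * Matrix.diagonal (RCLike.ofReal ∘ lam) * star U := hSc.spectral_theorem
  -- map everything to ℂ(t)
  set φ : ℂ →+* RatFunc ℂ := RatFunc.C with hφ_def
  set U' : Matrix (Fin n) (Fin n) (RatFunc ℂ) := U.map φ with hU'_def
  set V' : Matrix (Fin n) (Fin n) (RatFunc ℂ) := (star U).map φ with hV'_def
  have hUV : U' * V' = 1 := by
    rw [hU'_def, hV'_def, ← Matrix.map_mul,
      Matrix.mem_unitaryGroup_iff.mp hSc.eigenvectorUnitary.2]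
    exact Matrix.map_one φ φ.map_zero φ.map_one
  have hVU : V' * U' = 1 := by
    rw [hU'_def, hV'_def, ← Matrix.map_mul,
      Matrix.mem_unitaryGroup_iff'.mp hSc.eigenvectorUnitary.2]
    exact Matrix.map_one φ φ.map_zero φ.map_one
  -- the diagonal polynomials
  set Q : Fin n → ℂ[X] := fun k => X ^ 2 - Polynomial.C ((lam k : ℝ) : ℂ) * X + 1 with hQ_def
  have hQ0 : ∀ k, Q k ≠ 0 := by
    intro k h
    have : (Q k).eval 0 = 1 := by simp [hQ_def]
    rw [h] at this
    simp at this
  have hQdeg : ∀ k, (Q k).natDegree ≤ 2 := by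
    intro k
    show (X ^ 2 - Polynomial.C ((lam k : ℝ) : ℂ) * X + 1).natDegree ≤ 2
    compute_degree!
  set alg : ℂ[X] →+* RatFunc ℂ := algebraMap ℂ[X] (RatFunc ℂ) with halg_def
  set D : Matrix (Fin n) (Fin n) (RatFunc ℂ) := Matrix.diagonal (fun k => alg (Q k)) with hD_def
  -- the key factorization Cmat = U' * D * V'
  have key : Cmat n S = U' * D * V' := by
    have hmap : S.map (fun x => RatFunc.C (x : ℂ)) = Sc.map φ := by
      rw [hSc_def, Matrix.map_map]; rfl
    have hmap2 : Sc.map φ = U' * (Matrix.diagonal (φ ∘ RCLike.ofReal ∘ lam)) * V' := by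
      rw [hspec, Matrix.map_mul, Matrix.map_mul, Matrix.diagonal_map φ.map_zero]
      rfl
    rw [Cmat, hmap, hmap2]
    have h1 : (1 + (RatFunc.X : RatFunc ℂ) ^ 2) • (1 : Matrix (Fin n) (Fin n) (RatFunc ℂ)) =
        U' * ((1 + (RatFunc.X : RatFunc ℂ) ^ 2) •
          (1 : Matrix (Fin n) (Fin n) (RatFunc ℂ))) * V' := by
      rw [Matrix.mul_smul, Matrix.smul_mul, Matrix.mul_one, hUV]
    have h2 : (RatFunc.X : RatFunc ℂ) •
        (U' * (Matrix.diagonal (φ ∘ RCLike.ofReal ∘ lam)) * V') =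
        U' * ((RatFunc.X : RatFunc ℂ) • (Matrix.diagonal (φ ∘ RCLike.ofReal ∘ lam))) * V' := by
      rw [Matrix.mul_smul, Matrix.smul_mul]
    rw [h1, h2, ← Matrix.sub_mul, ← Matrix.mul_sub]
    congr 1
    congr 1
    rw [hD_def]
    ext i j
    by_cases h : i = j
    · subst h
      simp only [Matrix.sub_apply, Matrix.smul_apply, Matrix.one_apply_eq,
        Matrix.diagonal_apply_eq, smul_eq_mul, mul_one, Function.comp_apply]
      show (1 + (RatFunc.X : RatFunc ℂ) ^ 2) - RatFunc.X * φ ((lam i : ℝ) : ℂ) = alg (Q i)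
      rw [hQ_def, halg_def, hφ_def]
      simp only [_root_.map_add, _root_.map_sub, _root_.map_mul, _root_.map_pow,
        _root_.map_one, RatFunc.algebraMap_X, RatFunc.algebraMap_C]
      ring
    · simp [Matrix.one_apply_ne h, Matrix.diagonal_apply_ne _ h, h]
  -- the explicit inverse
  set Dinv : Matrix (Fin n) (Fin n) (RatFunc ℂ) :=
    Matrix.diagonal (fun k => (alg (Q k))⁻¹) with hDinv_def
  set B : Matrix (Fin n) (Fin n) (RatFunc ℂ) := U' * Dinv * V' with hB_def
  have hDD : D * Dinv = 1 := by
    rw [hD_def, hDinv_def, Matrix.diagonal_mul_diagonal]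
    convert Matrix.diagonal_one with k
    exact mul_inv_cancel₀ (RatFunc.algebraMap_ne_zero (hQ0 k))
  have hright : Cmat n S * B = 1 := by
    rw [key, hB_def]
    calc U' * D * V' * (U' * Dinv * V')
        = U' * D * (V' * U') * Dinv * V' := by
          simp only [Matrix.mul_assoc]
      _ = U' * (D * Dinv) * V' := by rw [hVU]; simp only [Matrix.mul_assoc, Matrix.one_mul]
      _ = 1 := by rw [hDD, Matrix.mul_one, hUV]
  have hUnit : IsUnit (Cmat n S) :=
    (Matrix.isUnit_iff_isUnit_det _).mpr (Matrix.isUnit_det_of_right_inverse hright)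
  refine ⟨hUnit, ?_⟩
  intro i j z
  have hinv : (Cmat n S)⁻¹ = B := Matrix.inv_eq_right_inv hright
  have hentry : (Cmat n S)⁻¹ i j = ∑ k, U' i k * (alg (Q k))⁻¹ * V' k j := by
    rw [hinv, hB_def, Matrix.mul_apply]
    congr 1
    ext k
    rw [Matrix.mul_diagonal]
  apply Reg.denom_ne
  rw [hentry, Finset.mul_sum]
  apply reg_sum
  intro k _
  have hrw : ((RatFunc.X : RatFunc ℂ) - RatFunc.C z) ^ 2 *
      (U' i k * (alg (Q k))⁻¹ * V' k j) =
      (((RatFunc.X : RatFunc ℂ) - RatFunc.C z) ^ 2 * (alg (Q k))⁻¹) *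
        (U' i k * V' k j) := by ring
  rw [hrw]
  refine reg_mul (reg_key z (hQ0 k) (hQdeg k)) (reg_mul ?_ ?_)
  · exact reg_const z (U i k)
  · exact reg_const z ((star U) k j)
end
end

section
/- Let $p, q \ge 0$ be integers and let $F = \mathbb{Q}(\hbar, u, v_1, \dots, v_p, w_1, \dots, w_q)$ be the field of rational functions in $p+q+2$ independent indeterminates. Then the following identity holds in $F$: $\sum_{k=1}^{p} \frac{\hbar}{u - v_k} \prod_{\substack{1\le i\le p\\ i\ne k}} \frac{v_k - v_i + \hbar}{v_k - v_i} \prod_{i=1}^{q} \frac{v_k - w_i}{v_k - w_i + \hbar} \;-\; \sum_{k=1}^{q} \frac{\hbar}{u - w_k + \hbar} \prod_{\substack{1\le i\le q\\ i\ne k}} \frac{w_k - w_i - \hbar}{w_k - w_i} \prod_{i=1}^{p} \frac{w_k - v_i}{w_k - v_i - \hbar} \;=\; \prod_{i=1}^{p} \frac{u - v_i + \hbar}{u - v_i} \prod_{i=1}^{q} \frac{u - w_i}{u - w_i + \hbar} \;-\; 1$. -/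
/-!
A partial-fraction identity in `F = ℚ(ℏ, u, v₁, …, v_p, w₁, …, w_q)`, used in the
localization computation of commutators of Baranovsky operators.
-/

set_option synthInstance.maxHeartbeats 1000000
set_option maxHeartbeats 1000000

noncomputable section

/-- The field `F = ℚ(ℏ, u, v₁, …, v_p, w₁, …, w_q)` of rational functions in `p + q + 2`
independent indeterminates. -/
abbrev PFField (p q : ℕ) : Type :=
  FractionRing (MvPolynomial (Fin 2 ⊕ (Fin p ⊕ Fin q)) ℚ)

/-- The indeterminates, as elements of `F`. -/
def gen (p q : ℕ) (s : Fin 2 ⊕ (Fin p ⊕ Fin q)) : PFField p q :=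
  algebraMap (MvPolynomial (Fin 2 ⊕ (Fin p ⊕ Fin q)) ℚ) (PFField p q) (MvPolynomial.X s)

open Polynomial Finset

lemma key_poly {K : Type*} [Field K] {ι : Type*} [Fintype ι] [DecidableEq ι]
    (a b : ι → K) (ha : Function.Injective a) :
    (∏ i, (X - C (b i))) =
      (∏ i, (X - C (a i))) +
        ∑ k, C ((∏ i, (a k - b i)) / (∏ i ∈ univ.erase k, (a k - a i))) *
          ∏ i ∈ univ.erase k, (X - C (a i)) := by
  cases isEmpty_or_nonempty ι with
  | inl h => simp
  | inr h =>
    have hcard : 1 ≤ Fintype.card ι := Fintype.card_pos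
    set P : K[X] := ∏ i, (X - C (b i)) with hP
    set Q : K[X] := ∏ i, (X - C (a i)) with hQ
    set S : K[X] := ∑ k, C ((∏ i, (a k - b i)) / (∏ i ∈ univ.erase k, (a k - a i))) *
          ∏ i ∈ univ.erase k, (X - C (a i)) with hS
    have hPm : P.Monic := monic_prod_of_monic _ _ fun i _ => monic_X_sub_C _
    have hQm : Q.Monic := monic_prod_of_monic _ _ fun i _ => monic_X_sub_C _
    have hPdeg : P.degree = (Fintype.card ι : ℕ) := by
      rw [hP, degree_prod]
      simp [degree_X_sub_C, Finset.card_univ]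
    have hQdeg : Q.degree = (Fintype.card ι : ℕ) := by
      rw [hQ, degree_prod]
      simp [degree_X_sub_C, Finset.card_univ]
    have hPQ : (P - Q).degree < (Fintype.card ι : ℕ) := by
      rcases eq_or_ne P Q with h | h
      · simp [h]
      · have := degree_sub_lt (hPdeg.trans hQdeg.symm) hPm.ne_zero (by rw [hPm.leadingCoeff, hQm.leadingCoeff])
        rwa [hPdeg] at this
    have hSdeg : S.degree < (Fintype.card ι : ℕ) := by
      rw [hS]
      refine lt_of_le_of_lt (degree_sum_le _ _) ?_
      rw [Finset.sup_lt_iff (by exact_mod_cast WithBot.bot_lt_coe _)]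
      intro k _
      refine lt_of_le_of_lt (degree_mul_le _ _) ?_
      have h1 : (∏ i ∈ univ.erase k, (X - C (a i)) : K[X]).degree = ((Fintype.card ι - 1 : ℕ) : WithBot ℕ) := by
        rw [degree_prod]
        simp [degree_X_sub_C, Finset.card_erase_of_mem, Finset.card_univ]
      rw [h1]
      calc (C ((∏ i, (a k - b i)) / (∏ i ∈ univ.erase k, (a k - a i)))).degree + ((Fintype.card ι - 1 : ℕ) : WithBot ℕ)
          ≤ 0 + ((Fintype.card ι - 1 : ℕ) : WithBot ℕ) := by
            gcongr; exact degree_C_le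
        _ < (Fintype.card ι : ℕ) := by
            rw [zero_add]
            exact_mod_cast Nat.sub_lt hcard one_pos
    have hdeg : (P - (Q + S)).degree < (Fintype.card ι : ℕ) := by
      have e : P - (Q + S) = (P - Q) - S := by ring
      rw [e]
      refine lt_of_le_of_lt (degree_sub_le _ _) ?_
      exact max_lt hPQ hSdeg
    have heval : ∀ j, (P - (Q + S)).eval (a j) = 0 := by
      intro j
      have hQe : Q.eval (a j) = 0 := by
        rw [hQ, eval_prod]
        exact Finset.prod_eq_zero (mem_univ j) (by simp)
      have hSe : S.eval (a j) = P.eval (a j) := by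
        rw [hS, eval_finset_sum]
        rw [Finset.sum_eq_single j]
        · have hne : (∏ i ∈ univ.erase j, (a j - a i)) ≠ 0 := by
            apply Finset.prod_ne_zero_iff.2
            intro i hi
            exact sub_ne_zero.2 fun hh => (Finset.mem_erase.1 hi).1 (ha hh).symm
          simp only [eval_mul, eval_C, eval_prod, eval_sub, eval_X]
          rw [div_mul_cancel₀ _ hne, hP, eval_prod]
          simp
        · intro k _ hk
          simp only [eval_mul, eval_C, eval_prod, eval_sub, eval_X]
          have hz : (∏ x ∈ univ.erase k, (a j - a x)) = 0 :=
            Finset.prod_eq_zero (Finset.mem_erase.2 ⟨hk.symm, mem_univ j⟩) (sub_self (a j))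
          rw [hz, mul_zero]
        · simp
      simp [hQe, hSe]
    rcases eq_or_ne (P - (Q + S)) 0 with h0 | h0
    · exact sub_eq_zero.1 h0
    · exfalso
      apply h0
      apply eq_zero_of_natDegree_lt_card_of_eval_eq_zero _ ha heval
      exact (natDegree_lt_iff_degree_lt h0).2 hdeg

lemma key_scalar {K : Type*} [Field K] {ι : Type*} [Fintype ι] [DecidableEq ι]
    (a b : ι → K) (ha : Function.Injective a) (z : K) (hz : ∀ i, z - a i ≠ 0) :
    ∏ i, (z - b i) / (z - a i) =
      1 + ∑ k, (∏ i, (a k - b i)) / ((z - a k) * ∏ i ∈ univ.erase k, (a k - a i)) := by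
  have hP := congrArg (Polynomial.eval z) (key_poly a b ha)
  simp only [eval_prod, eval_add, eval_finset_sum, eval_mul, eval_C, eval_sub, eval_X] at hP
  have hprodne : (∏ i, (z - a i)) ≠ 0 := Finset.prod_ne_zero_iff.2 fun i _ => hz i
  rw [Finset.prod_div_distrib, hP, add_div, div_self hprodne, Finset.sum_div]
  congr 1
  apply Finset.sum_congr rfl
  intro k _
  have h2 : (∏ i ∈ univ.erase k, (z - a i)) ≠ 0 :=
    Finset.prod_ne_zero_iff.2 fun i _ => hz i
  have h3 : (∏ i ∈ univ.erase k, (a k - a i)) ≠ 0 :=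
    Finset.prod_ne_zero_iff.2 fun i hi =>
      sub_ne_zero.2 fun hh => (Finset.mem_erase.1 hi).1 (ha hh).symm
  have e1 : (∏ i, (z - a i)) = (z - a k) * ∏ i ∈ univ.erase k, (z - a i) :=
    (Finset.mul_prod_erase _ _ (mem_univ k)).symm
  have h4 : z - a k ≠ 0 := hz k
  rw [e1]
  field_simp

set_option synthInstance.maxHeartbeats 1000000
set_option maxHeartbeats 1000000

noncomputable section

lemma gen_ne {p q : ℕ} (P : MvPolynomial (Fin 2 ⊕ (Fin p ⊕ Fin q)) ℚ)
    (f : (Fin 2 ⊕ (Fin p ⊕ Fin q)) → ℚ) (h : MvPolynomial.eval f P ≠ 0) :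
    algebraMap (MvPolynomial (Fin 2 ⊕ (Fin p ⊕ Fin q)) ℚ) (PFField p q) P ≠ 0 := by
  intro h0
  have hP : P = 0 := by
    have := IsFractionRing.injective (MvPolynomial (Fin 2 ⊕ (Fin p ⊕ Fin q)) ℚ) (PFField p q)
    exact this (by simpa using h0)
  exact h (by simp [hP])

lemma gen_ne_zero {p q : ℕ} (s : Fin 2 ⊕ (Fin p ⊕ Fin q)) : gen p q s ≠ 0 := by
  classical
  exact gen_ne _ (fun x => if x = s then 1 else 0) (by simp)

lemma gen_sub_ne {p q : ℕ} {s t : Fin 2 ⊕ (Fin p ⊕ Fin q)} (hst : s ≠ t) :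
    gen p q s - gen p q t ≠ 0 := by
  classical
  have : gen p q s - gen p q t =
      algebraMap (MvPolynomial (Fin 2 ⊕ (Fin p ⊕ Fin q)) ℚ) (PFField p q)
        (MvPolynomial.X s - MvPolynomial.X t) := by
    simp [gen, map_sub]
  rw [this]
  exact gen_ne _ (fun x => if x = s then 1 else 0) (by simp [Ne.symm hst])

lemma gen_sub_add_ne {p q : ℕ} {s t h : Fin 2 ⊕ (Fin p ⊕ Fin q)} (hst : s ≠ t) (hsh : s ≠ h) :
    gen p q s - gen p q t + gen p q h ≠ 0 := by
  classical
  have : gen p q s - gen p q t + gen p q h =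
      algebraMap (MvPolynomial (Fin 2 ⊕ (Fin p ⊕ Fin q)) ℚ) (PFField p q)
        (MvPolynomial.X s - MvPolynomial.X t + MvPolynomial.X h) := by
    simp [gen, map_sub, map_add]
  rw [this]
  exact gen_ne _ (fun x => if x = s then 1 else 0) (by simp [Ne.symm hst, Ne.symm hsh])

lemma gen_sub_sub_ne {p q : ℕ} {s t h : Fin 2 ⊕ (Fin p ⊕ Fin q)} (hst : s ≠ t) (hsh : s ≠ h) :
    gen p q s - gen p q t - gen p q h ≠ 0 := by
  classical
  have : gen p q s - gen p q t - gen p q h =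
      algebraMap (MvPolynomial (Fin 2 ⊕ (Fin p ⊕ Fin q)) ℚ) (PFField p q)
        (MvPolynomial.X s - MvPolynomial.X t - MvPolynomial.X h) := by
    simp [gen, map_sub]
  rw [this]
  exact gen_ne _ (fun x => if x = s then 1 else 0) (by simp [Ne.symm hst, Ne.symm hsh])



open Finset in
lemma erase_inl {α β : Type*} [Fintype α] [Fintype β] [DecidableEq α] [DecidableEq β] (k : α) :
    (Finset.univ : Finset (α ⊕ β)).erase (Sum.inl k) =
      (Finset.univ.erase k).disjSum Finset.univ := by
  ext x
  cases x <;> simp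

open Finset in
lemma erase_inr {α β : Type*} [Fintype α] [Fintype β] [DecidableEq α] [DecidableEq β] (k : β) :
    (Finset.univ : Finset (α ⊕ β)).erase (Sum.inr k) =
      Finset.univ.disjSum (Finset.univ.erase k) := by
  ext x
  cases x <;> simp


open Finset

lemma termP_generic {K : Type*} [Field K] {p q : ℕ} (ε u : K) (v : Fin p → K) (w : Fin q → K)
    (k : Fin p) (h1 : u - v k ≠ 0)
    (h2 : ∀ i ∈ Finset.univ.erase k, v k - v i ≠ 0)
    (h3 : ∀ j : Fin q, v k - w j + ε ≠ 0) :
    ((∏ i, (v k - (v i - ε))) * ∏ j, (v k - w j)) /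
      ((u - v k) * ((∏ i ∈ Finset.univ.erase k, (v k - v i)) * ∏ j, (v k - (w j - ε))))
    = ε / (u - v k) * (∏ i ∈ Finset.univ.erase k, (v k - v i + ε) / (v k - v i)) *
        ∏ j, (v k - w j) / (v k - w j + ε) := by
  have c1 : (∏ i, (v k - (v i - ε))) = ε * ∏ i ∈ Finset.univ.erase k, (v k - v i + ε) := by
    rw [← Finset.mul_prod_erase _ _ (Finset.mem_univ k),
      show v k - (v k - ε) = ε from by ring]
    exact congrArg _ (Finset.prod_congr rfl fun i _ => by ring)
  have c2 : (∏ j, (v k - (w j - ε))) = ∏ j, (v k - w j + ε) :=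
    Finset.prod_congr rfl fun j _ => by ring
  have hB : (∏ i ∈ Finset.univ.erase k, (v k - v i)) ≠ 0 := Finset.prod_ne_zero_iff.2 h2
  have hC : (∏ j, (v k - w j + ε)) ≠ 0 := Finset.prod_ne_zero_iff.2 fun j _ => h3 j
  rw [c1, c2, Finset.prod_div_distrib, Finset.prod_div_distrib,
    div_mul_div_comm, div_mul_div_comm,
    div_eq_div_iff (mul_ne_zero h1 (mul_ne_zero hB hC))
      (mul_ne_zero (mul_ne_zero h1 hB) hC)]
  ring

lemma termQ_generic {K : Type*} [Field K] {p q : ℕ} (ε u : K) (v : Fin p → K) (w : Fin q → K)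
    (k : Fin q) (h1 : u - w k + ε ≠ 0)
    (h2 : ∀ j ∈ Finset.univ.erase k, w k - w j ≠ 0)
    (h3 : ∀ i : Fin p, w k - v i - ε ≠ 0) :
    ((∏ i, (w k - ε - (v i - ε))) * ∏ j, (w k - ε - w j)) /
      ((u - (w k - ε)) * ((∏ i, (w k - ε - v i)) * ∏ j ∈ Finset.univ.erase k, (w k - ε - (w j - ε))))
    = -(ε / (u - w k + ε) * (∏ j ∈ Finset.univ.erase k, (w k - w j - ε) / (w k - w j)) *
        ∏ i, (w k - v i) / (w k - v i - ε)) := by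
  have c1 : (∏ j, (w k - ε - w j)) = -ε * ∏ j ∈ Finset.univ.erase k, (w k - w j - ε) := by
    rw [← Finset.mul_prod_erase _ _ (Finset.mem_univ k),
      show w k - ε - w k = -ε from by ring]
    exact congrArg _ (Finset.prod_congr rfl fun j _ => by ring)
  have c2 : (∏ i, (w k - ε - (v i - ε))) = ∏ i, (w k - v i) :=
    Finset.prod_congr rfl fun i _ => by ring
  have c3 : (∏ j ∈ Finset.univ.erase k, (w k - ε - (w j - ε))) =
      ∏ j ∈ Finset.univ.erase k, (w k - w j) :=
    Finset.prod_congr rfl fun j _ => by ring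
  have c4 : (∏ i, (w k - ε - v i)) = ∏ i, (w k - v i - ε) :=
    Finset.prod_congr rfl fun i _ => by ring
  have c5 : u - (w k - ε) = u - w k + ε := by ring
  have hB : (∏ j ∈ Finset.univ.erase k, (w k - w j)) ≠ 0 := Finset.prod_ne_zero_iff.2 h2
  have hC : (∏ i, (w k - v i - ε)) ≠ 0 := Finset.prod_ne_zero_iff.2 fun i _ => h3 i
  rw [c1, c2, c3, c4, c5, Finset.prod_div_distrib, Finset.prod_div_distrib,
    div_mul_div_comm, div_mul_div_comm, ← neg_div,
    div_eq_div_iff (mul_ne_zero h1 (mul_ne_zero hC hB))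
      (mul_ne_zero (mul_ne_zero h1 hB) hC)]
  ring

lemma termP (p q : ℕ) (k : Fin p) :
    ((∏ i : Fin p, (gen p q (Sum.inr (Sum.inl k)) - (gen p q (Sum.inr (Sum.inl i)) - gen p q (Sum.inl 0)))) *
        ∏ i : Fin q, (gen p q (Sum.inr (Sum.inl k)) - gen p q (Sum.inr (Sum.inr i)))) /
      ((gen p q (Sum.inl 1) - gen p q (Sum.inr (Sum.inl k))) *
        ((∏ i ∈ Finset.univ.erase k, (gen p q (Sum.inr (Sum.inl k)) - gen p q (Sum.inr (Sum.inl i)))) *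
          ∏ i : Fin q, (gen p q (Sum.inr (Sum.inl k)) - (gen p q (Sum.inr (Sum.inr i)) - gen p q (Sum.inl 0)))))
    = gen p q (Sum.inl 0) / (gen p q (Sum.inl 1) - gen p q (Sum.inr (Sum.inl k))) *
        (∏ i ∈ Finset.univ.erase k, (gen p q (Sum.inr (Sum.inl k)) - gen p q (Sum.inr (Sum.inl i)) + gen p q (Sum.inl 0)) / (gen p q (Sum.inr (Sum.inl k)) - gen p q (Sum.inr (Sum.inl i)))) *
        ∏ i : Fin q, (gen p q (Sum.inr (Sum.inl k)) - gen p q (Sum.inr (Sum.inr i))) / (gen p q (Sum.inr (Sum.inl k)) - gen p q (Sum.inr (Sum.inr i)) + gen p q (Sum.inl 0)) :=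
  termP_generic (gen p q (Sum.inl 0)) (gen p q (Sum.inl 1)) (fun i => gen p q (Sum.inr (Sum.inl i))) (fun j => gen p q (Sum.inr (Sum.inr j))) k
    (gen_sub_ne (by simp))
    (fun i hi => gen_sub_ne (by simpa using Ne.symm (Finset.mem_erase.1 hi).1))
    (fun j => gen_sub_add_ne (by simp) (by simp))

lemma termQ (p q : ℕ) (k : Fin q) :
    ((∏ i : Fin p, (gen p q (Sum.inr (Sum.inr k)) - gen p q (Sum.inl 0) - (gen p q (Sum.inr (Sum.inl i)) - gen p q (Sum.inl 0)))) *
        ∏ i : Fin q, (gen p q (Sum.inr (Sum.inr k)) - gen p q (Sum.inl 0) - gen p q (Sum.inr (Sum.inr i)))) /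
      ((gen p q (Sum.inl 1) - (gen p q (Sum.inr (Sum.inr k)) - gen p q (Sum.inl 0))) *
        ((∏ i : Fin p, (gen p q (Sum.inr (Sum.inr k)) - gen p q (Sum.inl 0) - gen p q (Sum.inr (Sum.inl i)))) *
          ∏ i ∈ Finset.univ.erase k, (gen p q (Sum.inr (Sum.inr k)) - gen p q (Sum.inl 0) - (gen p q (Sum.inr (Sum.inr i)) - gen p q (Sum.inl 0)))))
    = -(gen p q (Sum.inl 0) / (gen p q (Sum.inl 1) - gen p q (Sum.inr (Sum.inr k)) + gen p q (Sum.inl 0)) *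
        (∏ i ∈ Finset.univ.erase k, (gen p q (Sum.inr (Sum.inr k)) - gen p q (Sum.inr (Sum.inr i)) - gen p q (Sum.inl 0)) / (gen p q (Sum.inr (Sum.inr k)) - gen p q (Sum.inr (Sum.inr i)))) *
        ∏ i : Fin p, (gen p q (Sum.inr (Sum.inr k)) - gen p q (Sum.inr (Sum.inl i))) / (gen p q (Sum.inr (Sum.inr k)) - gen p q (Sum.inr (Sum.inl i)) - gen p q (Sum.inl 0))) :=
  termQ_generic (gen p q (Sum.inl 0)) (gen p q (Sum.inl 1)) (fun i => gen p q (Sum.inr (Sum.inl i))) (fun j => gen p q (Sum.inr (Sum.inr j))) k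
    (gen_sub_add_ne (by simp) (by simp))
    (fun j hj => gen_sub_ne (by simpa using Ne.symm (Finset.mem_erase.1 hj).1))
    (fun i => gen_sub_sub_ne (by simp) (by simp))

lemma rhsP (p q : ℕ) :
    (∏ x : Fin p, (gen p q (Sum.inl 1) - (gen p q (Sum.inr (Sum.inl x)) - gen p q (Sum.inl 0))) / (gen p q (Sum.inl 1) - gen p q (Sum.inr (Sum.inl x))))
    = ∏ x : Fin p, (gen p q (Sum.inl 1) - gen p q (Sum.inr (Sum.inl x)) + gen p q (Sum.inl 0)) / (gen p q (Sum.inl 1) - gen p q (Sum.inr (Sum.inl x))) :=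
  Finset.prod_congr rfl fun i _ => by
    rw [show gen p q (Sum.inl 1) - (gen p q (Sum.inr (Sum.inl i)) - gen p q (Sum.inl 0)) = gen p q (Sum.inl 1) - gen p q (Sum.inr (Sum.inl i)) + gen p q (Sum.inl 0) from by ring]

lemma rhsQ (p q : ℕ) :
    (∏ x : Fin q, (gen p q (Sum.inl 1) - gen p q (Sum.inr (Sum.inr x))) / (gen p q (Sum.inl 1) - (gen p q (Sum.inr (Sum.inr x)) - gen p q (Sum.inl 0))))
    = ∏ x : Fin q, (gen p q (Sum.inl 1) - gen p q (Sum.inr (Sum.inr x))) / (gen p q (Sum.inl 1) - gen p q (Sum.inr (Sum.inr x)) + gen p q (Sum.inl 0)) :=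
  Finset.prod_congr rfl fun j _ => by
    rw [show gen p q (Sum.inl 1) - (gen p q (Sum.inr (Sum.inr j)) - gen p q (Sum.inl 0)) = gen p q (Sum.inl 1) - gen p q (Sum.inr (Sum.inr j)) + gen p q (Sum.inl 0) from by ring]


/-- **A partial fraction identity.**  In `F = ℚ(ℏ, u, v₁, …, v_p, w₁, …, w_q)`,
`∑_k (ℏ/(u-v_k)) ∏_{i≠k} ((v_k-v_i+ℏ)/(v_k-v_i)) ∏_i ((v_k-w_i)/(v_k-w_i+ℏ))`
`− ∑_k (ℏ/(u-w_k+ℏ)) ∏_{i≠k} ((w_k-w_i-ℏ)/(w_k-w_i)) ∏_i ((w_k-v_i)/(w_k-v_i-ℏ))`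
`= ∏_i ((u-v_i+ℏ)/(u-v_i)) ∏_i ((u-w_i)/(u-w_i+ℏ)) − 1`. -/
theorem partial_fraction_identity (p q : ℕ) :
    (∑ k : Fin p,
        gen p q (Sum.inl 0) / (gen p q (Sum.inl 1) - gen p q (Sum.inr (Sum.inl k))) *
          (∏ i ∈ Finset.univ.erase k,
            (gen p q (Sum.inr (Sum.inl k)) - gen p q (Sum.inr (Sum.inl i)) +
                gen p q (Sum.inl 0)) /
              (gen p q (Sum.inr (Sum.inl k)) - gen p q (Sum.inr (Sum.inl i)))) *
          (∏ i : Fin q,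
            (gen p q (Sum.inr (Sum.inl k)) - gen p q (Sum.inr (Sum.inr i))) /
              (gen p q (Sum.inr (Sum.inl k)) - gen p q (Sum.inr (Sum.inr i)) +
                gen p q (Sum.inl 0)))) -
      (∑ k : Fin q,
          gen p q (Sum.inl 0) /
              (gen p q (Sum.inl 1) - gen p q (Sum.inr (Sum.inr k)) + gen p q (Sum.inl 0)) *
            (∏ i ∈ Finset.univ.erase k,
              (gen p q (Sum.inr (Sum.inr k)) - gen p q (Sum.inr (Sum.inr i)) -
                  gen p q (Sum.inl 0)) /
                (gen p q (Sum.inr (Sum.inr k)) - gen p q (Sum.inr (Sum.inr i)))) *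
            (∏ i : Fin p,
              (gen p q (Sum.inr (Sum.inr k)) - gen p q (Sum.inr (Sum.inl i))) /
                (gen p q (Sum.inr (Sum.inr k)) - gen p q (Sum.inr (Sum.inl i)) -
                  gen p q (Sum.inl 0))))
      = (∏ i : Fin p,
            (gen p q (Sum.inl 1) - gen p q (Sum.inr (Sum.inl i)) + gen p q (Sum.inl 0)) /
              (gen p q (Sum.inl 1) - gen p q (Sum.inr (Sum.inl i)))) *
          (∏ i : Fin q,
            (gen p q (Sum.inl 1) - gen p q (Sum.inr (Sum.inr i))) /
              (gen p q (Sum.inl 1) - gen p q (Sum.inr (Sum.inr i)) + gen p q (Sum.inl 0)))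
        - 1 := by
  classical
  have hinj : Function.Injective
      (Sum.elim (fun i => gen p q (Sum.inr (Sum.inl i)))
        (fun j => gen p q (Sum.inr (Sum.inr j)) - gen p q (Sum.inl 0)) :
        Fin p ⊕ Fin q → PFField p q) := by
    rintro (i | i) (j | j) hij <;> simp only [Sum.elim_inl, Sum.elim_inr] at hij
    · have : i = j := by
        by_contra hne
        exact gen_sub_ne (p := p) (q := q)
          (s := Sum.inr (Sum.inl i)) (t := Sum.inr (Sum.inl j))
          (by simp [hne]) (sub_eq_zero.2 hij)
      simp [this]
    · exfalso
      exact gen_sub_add_ne (p := p) (q := q)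
        (s := Sum.inr (Sum.inl i)) (t := Sum.inr (Sum.inr j)) (h := Sum.inl 0)
        (by simp) (by simp) (by rw [hij]; ring)
    · exfalso
      exact gen_sub_add_ne (p := p) (q := q)
        (s := Sum.inr (Sum.inl j)) (t := Sum.inr (Sum.inr i)) (h := Sum.inl 0)
        (by simp) (by simp) (by rw [← hij]; ring)
    · have : i = j := by
        by_contra hne
        exact gen_sub_ne (p := p) (q := q)
          (s := Sum.inr (Sum.inr i)) (t := Sum.inr (Sum.inr j))
          (by simp [hne]) (sub_eq_zero.2 (sub_left_inj.1 hij))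
      simp [this]
  have hz : ∀ x : Fin p ⊕ Fin q,
      gen p q (Sum.inl 1) - (Sum.elim (fun i => gen p q (Sum.inr (Sum.inl i)))
        (fun j => gen p q (Sum.inr (Sum.inr j)) - gen p q (Sum.inl 0))) x ≠ 0 := by
    rintro (i | j)
    · exact gen_sub_ne (by simp)
    · simp only [Sum.elim_inr]
      rw [show gen p q (Sum.inl 1) - (gen p q (Sum.inr (Sum.inr j)) - gen p q (Sum.inl 0)) =
        gen p q (Sum.inl 1) - gen p q (Sum.inr (Sum.inr j)) + gen p q (Sum.inl 0) from by ring]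
      exact gen_sub_add_ne (by simp) (by simp)
  have hK := key_scalar
    (Sum.elim (fun i => gen p q (Sum.inr (Sum.inl i)))
      (fun j => gen p q (Sum.inr (Sum.inr j)) - gen p q (Sum.inl 0)))
    (Sum.elim (fun i => gen p q (Sum.inr (Sum.inl i)) - gen p q (Sum.inl 0))
      (fun j => gen p q (Sum.inr (Sum.inr j))))
    hinj (gen p q (Sum.inl 1)) hz
  rw [Fintype.prod_sum_type, Fintype.sum_sum_type] at hK
  simp only [Sum.elim_inl, Sum.elim_inr, erase_inl, erase_inr, Finset.prod_disjSum,
    Fintype.prod_sum_type] at hK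
  simp only [termP p q, termQ p q, rhsP p q, rhsQ p q, Finset.sum_neg_distrib] at hK
  linear_combination -hK

end
end
end

section
/- Let $K$ be a field of characteristic zero and let $F = K[p_1, p_2, \dots]$, $F' \otimes F'' := K[p'_1,p'_2,\dots]\otimes_K K[p''_1,p''_2,\dots]$. Equip $F$ with the unique symmetric bilinear form with $\langle 1,1\rangle = 1$ and $\langle p_n x, y\rangle = \langle x, n\,\partial y/\partial p_n\rangle$ for all $n > 0$, and equip $F\otimes F$ with the product form. Let $\Theta : K[p^+_1,p^+_2,\dots]\otimes K[p^-_1,p^-_2,\dots] \to F\otimes F$ be the algebra isomorphism with $\Theta(p^+_n) = p'_n + p''_n$ and $\Theta(p^-_n) = p'_n - p''_n$. Suppose $B$ is any $K$-linear endomorphism of $K[p^-_1,p^-_2,\dots]$ and set $A := \Theta\circ(\mathrm{id}\otimes B)\circ\Theta^{-1} \in \mathrm{End}_K(F\otimes F)$. If $\langle A(1\otimes v_1),\; 1\otimes v_2\rangle = 0$ for all $v_1, v_2 \in F$, then $A = 0$. In other words, an operator acting only on the antidiagonal Heisenberg factor $F^-$ of $F\otimes F$ is uniquely determined by its matrix elements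 on the vacuum sector $1\otimes F$. -/
/-!
An operator on the double Fock space `F ⊗ F` acting only on the antidiagonal Heisenberg
factor `F⁻` is uniquely determined by its matrix elements on the vacuum sector `1 ⊗ F`.
-/

open scoped TensorProduct

noncomputable section

/-- The rank-one Fock space `F = K[p₁, p₂, …]`. -/
abbrev FockSp (K : Type*) [Field K] : Type _ := MvPolynomial ℕ+ K

namespace FockAux

variable {K : Type*} [Field K] [CharZero K]

/-- normalization constant `z_m = ∏ n^{m n} (m n)!`. -/
def zc (K : Type*) [Field K] (m : ℕ+ →₀ ℕ) : K :=
  m.prod fun n k => ((n : ℕ) : K) ^ k * (Nat.factorial k : K)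

lemma zc_ne_zero (m : ℕ+ →₀ ℕ) : zc K m ≠ 0 := by
  refine Finset.prod_ne_zero_iff.2 fun n _ => ?_
  refine mul_ne_zero (pow_ne_zero _ ?_) ?_
  · exact_mod_cast Nat.cast_ne_zero.2 n.pos.ne'
  · exact_mod_cast Nat.cast_ne_zero.2 (Nat.factorial_ne_zero _)

lemma zc_zero : zc K 0 = 1 := by simp [zc]

lemma zc_rec (m : ℕ+ →₀ ℕ) (n : ℕ+) (hn : m n ≠ 0) :
    zc K m = ((n : ℕ) : K) * ((m n : ℕ) : K) * zc K (m - Finsupp.single n 1) := by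
  have hg : ∀ i : ℕ+, ((i : ℕ) : K) ^ (0:ℕ) * (Nat.factorial 0 : K) = 1 := by simp
  have h1 : zc K m
      = (((n : ℕ) : K) ^ (m n) * (Nat.factorial (m n) : K)) *
        ((m.erase n).prod fun i k => ((i : ℕ) : K) ^ k * (Nat.factorial k : K)) := by
    rw [zc, ← Finsupp.mul_prod_erase' m n _ hg]
  have herase : (m - Finsupp.single n 1).erase n = m.erase n := by
    ext i
    by_cases hi : i = n
    · simp [hi]
    · rw [Finsupp.erase_ne hi, Finsupp.erase_ne hi, Finsupp.tsub_apply,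
        Finsupp.single_eq_of_ne' (Ne.symm hi), Nat.sub_zero]
  have hval : (m - Finsupp.single n 1 : ℕ+ →₀ ℕ) n = m n - 1 := by
    rw [Finsupp.tsub_apply, Finsupp.single_eq_same]
  have h2 : zc K (m - Finsupp.single n 1)
      = (((n : ℕ) : K) ^ (m n - 1) * (Nat.factorial (m n - 1) : K)) *
        ((m.erase n).prod fun i k => ((i : ℕ) : K) ^ k * (Nat.factorial k : K)) := by
    rw [zc, ← Finsupp.mul_prod_erase' (m - Finsupp.single n 1) n _ hg, hval, herase]
  rw [h1, h2]
  obtain ⟨k, hk⟩ := Nat.exists_eq_succ_of_ne_zero hn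
  rw [hk]
  push_cast [Nat.factorial_succ, pow_succ]
  ring

end FockAux

namespace FockAux2

open MvPolynomial

variable {K : Type*} [Field K] [CharZero K]
variable (Bf : FockSp K →ₗ[K] FockSp K →ₗ[K] K)
variable (hsymm : ∀ x y, Bf x y = Bf y x)
variable (h11 : Bf 1 1 = 1)
variable (hadj : ∀ (n : ℕ+) (x y : FockSp K),
      Bf (MvPolynomial.X n * x) y = Bf x (((n : ℕ) : K) • MvPolynomial.pderiv n y))

lemma mon_split (m : ℕ+ →₀ ℕ) (n : ℕ+) (hn : m n ≠ 0) :
    (MvPolynomial.X n : FockSp K) * MvPolynomial.monomial (m - Finsupp.single n 1) 1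
      = MvPolynomial.monomial m 1 := by
  have hle : Finsupp.single n 1 ≤ m :=
    Finsupp.single_le_iff.2 (Nat.one_le_iff_ne_zero.2 hn)
  rw [MvPolynomial.X, MvPolynomial.monomial_mul, one_mul, add_tsub_cancel_of_le hle]

include hsymm h11 hadj in
lemma Bf_one_mon (m : ℕ+ →₀ ℕ) :
    Bf 1 (MvPolynomial.monomial m 1) = if m = 0 then 1 else 0 := by
  by_cases hm : m = 0
  · simp only [hm, if_pos rfl]
    rw [show (MvPolynomial.monomial (0 : ℕ+ →₀ ℕ) (1:K)) = 1 by
      rw [MvPolynomial.monomial_zero', MvPolynomial.C_1]]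
    exact h11
  · rw [if_neg hm, hsymm]
    obtain ⟨n, hn⟩ : ∃ n, m n ≠ 0 := by
      by_contra h
      push_neg at h
      exact hm (Finsupp.ext fun a => h a)
    rw [← mon_split m n hn, hadj]
    simp [MvPolynomial.pderiv_one]

include hsymm h11 hadj in
lemma Bf_mon (m m' : ℕ+ →₀ ℕ) :
    Bf (MvPolynomial.monomial m 1) (MvPolynomial.monomial m' 1)
      = if m = m' then FockAux.zc K m else 0 := by
  suffices H : ∀ N m m' : _, (m : ℕ+ →₀ ℕ).sum (fun _ k => k) = N →
      Bf (MvPolynomial.monomial m 1) (MvPolynomial.monomial m' 1)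
        = if m = m' then FockAux.zc K m else 0 from H _ m m' rfl
  intro N
  induction N using Nat.strong_induction_on with
  | _ N ih =>
    intro m m' hN
    by_cases hm : m = 0
    · subst hm
      rw [show (MvPolynomial.monomial (0 : ℕ+ →₀ ℕ) (1:K)) = 1 by
        rw [MvPolynomial.monomial_zero', MvPolynomial.C_1]]
      rw [Bf_one_mon Bf hsymm h11 hadj m']
      by_cases h0 : m' = 0 <;> simp [h0, eq_comm, FockAux.zc_zero]
    · obtain ⟨n, hn⟩ : ∃ n, m n ≠ 0 := by
        by_contra h
        push_neg at h
        exact hm (Finsupp.ext fun a => h a)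
      set m₀ := m - Finsupp.single n 1 with hm₀
      have hle : Finsupp.single n 1 ≤ m :=
        Finsupp.single_le_iff.2 (Nat.one_le_iff_ne_zero.2 hn)
      have hmsum : m₀.sum (fun _ k => k) + 1 = N := by
        have : Finsupp.single n 1 + m₀ = m := by
          rw [hm₀, add_tsub_cancel_of_le hle]
        calc m₀.sum (fun _ k => k) + 1
            = (Finsupp.single n 1 + m₀).sum (fun _ k => k) := by
              rw [Finsupp.sum_add_index' (fun _ => rfl) (fun _ _ _ => rfl)]
              rw [Finsupp.sum_single_index rfl]; ring
          _ = N := by rw [this, hN]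
      have hlt : m₀.sum (fun _ k => k) < N := by omega
      rw [← mon_split m n hn, hadj, map_smul, MvPolynomial.pderiv_monomial, one_mul]
      rw [show (MvPolynomial.monomial (m' - Finsupp.single n 1) ((m' n : K)) : FockSp K)
            = (m' n : K) • MvPolynomial.monomial (m' - Finsupp.single n 1) (1:K) by
        rw [MvPolynomial.smul_monomial, smul_eq_mul, mul_one]]
      rw [map_smul, smul_eq_mul, smul_eq_mul]
      rw [ih _ hlt m₀ (m' - Finsupp.single n 1) rfl]
      by_cases hn' : m' n = 0
      · have hne : m ≠ m' := fun h => (h ▸ hn) hn'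
        simp [hn', hne]
      · have hle' : Finsupp.single n 1 ≤ m' :=
          Finsupp.single_le_iff.2 (Nat.one_le_iff_ne_zero.2 hn')
        by_cases he : m₀ = m' - Finsupp.single n 1
        · have hmm : m = m' := by
            have h1 : Finsupp.single n 1 + m₀ = m := by
              rw [hm₀, add_tsub_cancel_of_le hle]
            have h2 : Finsupp.single n 1 + (m' - Finsupp.single n 1) = m' :=
              add_tsub_cancel_of_le hle'
            rw [← h1, he, h2]
          rw [if_pos he, if_pos hmm, FockAux.zc_rec m n hn, ← hm₀, hmm]
          ring
        · have hne : m ≠ m' := by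
            intro h
            exact he (by rw [hm₀, h])
          simp [he, hne]

end FockAux2

namespace FockAux3

open MvPolynomial

variable {K : Type*} [Field K] [CharZero K]

/-- The adjoint of multiplication by `X n`. -/
def pd (n : ℕ+) : FockSp K →ₗ[K] FockSp K :=
  ((n : ℕ) : K) • (MvPolynomial.pderiv n : Derivation K (FockSp K) (FockSp K)).toLinearMap

@[simp] lemma pd_apply (n : ℕ+) (x : FockSp K) :
    pd n x = ((n : ℕ) : K) • MvPolynomial.pderiv n x := rfl

variable (Bf : FockSp K →ₗ[K] FockSp K →ₗ[K] K)
variable (hsymm : ∀ x y, Bf x y = Bf y x)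
variable (h11 : Bf 1 1 = 1)
variable (hadj : ∀ (n : ℕ+) (x y : FockSp K),
      Bf (MvPolynomial.X n * x) y = Bf x (((n : ℕ) : K) • MvPolynomial.pderiv n y))
variable (B₂ : (FockSp K ⊗[K] FockSp K) →ₗ[K] (FockSp K ⊗[K] FockSp K) →ₗ[K] K)
variable (hB₂ : ∀ x y x' y' : FockSp K,
      B₂ (x ⊗ₜ[K] y) (x' ⊗ₜ[K] y') = Bf x x' * Bf y y')

include hsymm hB₂ in
lemma B2_symm (z w : FockSp K ⊗[K] FockSp K) : B₂ z w = B₂ w z := by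
  induction z using TensorProduct.induction_on with
  | zero => simp
  | tmul x y =>
    induction w using TensorProduct.induction_on with
    | zero => simp
    | tmul x' y' => rw [hB₂, hB₂, hsymm x x', hsymm y y']
    | add a b ha hb => simp only [map_add, LinearMap.add_apply, ha, hb]
  | add a b ha hb => simp only [map_add, LinearMap.add_apply, ha, hb]

include hadj hB₂ in
lemma B2_adj_fst (n : ℕ+) (z w : FockSp K ⊗[K] FockSp K) :
    B₂ ((MvPolynomial.X n ⊗ₜ[K] 1) * z) w
      = B₂ z (LinearMap.rTensor (FockSp K) (pd n) w) := by
  induction z using TensorProduct.induction_on with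
  | zero => simp
  | tmul x y =>
    induction w using TensorProduct.induction_on with
    | zero => simp
    | tmul x' y' =>
      rw [Algebra.TensorProduct.tmul_mul_tmul, one_mul, LinearMap.rTensor_tmul,
        hB₂, hB₂, hadj, pd_apply]
    | add a b ha hb => simp only [map_add, LinearMap.add_apply, ha, hb]
  | add a b ha hb =>
    simp only [mul_add, map_add, LinearMap.add_apply, ha, hb]

include hadj hB₂ in
lemma B2_adj_snd (n : ℕ+) (z w : FockSp K ⊗[K] FockSp K) :
    B₂ ((1 ⊗ₜ[K] MvPolynomial.X n) * z) w
      = B₂ z (LinearMap.lTensor (FockSp K) (pd n) w) := by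
  induction z using TensorProduct.induction_on with
  | zero => simp
  | tmul x y =>
    induction w using TensorProduct.induction_on with
    | zero => simp
    | tmul x' y' =>
      rw [Algebra.TensorProduct.tmul_mul_tmul, one_mul, LinearMap.lTensor_tmul,
        hB₂, hB₂, hadj, pd_apply]
    | add a b ha hb => simp only [map_add, LinearMap.add_apply, ha, hb]
  | add a b ha hb =>
    simp only [mul_add, map_add, LinearMap.add_apply, ha, hb]

include hsymm h11 hadj hB₂ in
lemma B2_nondeg (t : FockSp K ⊗[K] FockSp K)
    (h : ∀ y, B₂ t y = 0) : t = 0 := by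
  classical
  set bb := (MvPolynomial.basisMonomials ℕ+ K).tensorProduct
    (MvPolynomial.basisMonomials ℕ+ K) with hbb
  have hb : ∀ i : (ℕ+ →₀ ℕ) × (ℕ+ →₀ ℕ),
      bb i = MvPolynomial.monomial i.1 1 ⊗ₜ[K] MvPolynomial.monomial i.2 1 := by
    intro i
    rw [hbb, Module.Basis.tensorProduct_apply']
    rw [show ((MvPolynomial.basisMonomials ℕ+ K) i.1 : FockSp K)
        = MvPolynomial.monomial i.1 1 from congrFun (coe_basisMonomials ℕ+ K) i.1]
    rw [show ((MvPolynomial.basisMonomials ℕ+ K) i.2 : FockSp K)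
        = MvPolynomial.monomial i.2 1 from congrFun (coe_basisMonomials ℕ+ K) i.2]
  have hdiag : ∀ i j : (ℕ+ →₀ ℕ) × (ℕ+ →₀ ℕ),
      B₂ (bb i) (bb j) = if i = j then FockAux.zc K i.1 * FockAux.zc K i.2 else 0 := by
    intro i j
    rw [hb, hb, hB₂, FockAux2.Bf_mon Bf hsymm h11 hadj, FockAux2.Bf_mon Bf hsymm h11 hadj]
    by_cases h1 : i.1 = j.1 <;> by_cases h2 : i.2 = j.2 <;>
      simp [h1, h2, Prod.ext_iff]
  have key : ∀ j, bb.repr t j = 0 := by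
    intro j
    by_cases hj : j ∈ (bb.repr t).support
    · have ht : t = (bb.repr t).sum fun i c => c • bb i := by
        conv_lhs => rw [← bb.linearCombination_repr t]
        rw [Finsupp.linearCombination_apply]
      have h1 : B₂ t (bb j) = bb.repr t j * (FockAux.zc K j.1 * FockAux.zc K j.2) := by
        conv_lhs => rw [ht]
        calc B₂ ((bb.repr t).sum fun i c => c • bb i) (bb j)
            = B₂.flip (bb j) ((bb.repr t).sum fun i c => c • bb i) := rfl
          _ = (bb.repr t).sum fun i c => B₂.flip (bb j) (c • bb i) := map_finsuppSum _ _ _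
          _ = (bb.repr t).sum fun i c =>
                if i = j then c * (FockAux.zc K j.1 * FockAux.zc K j.2) else 0 := by
              refine Finsupp.sum_congr fun i _ => ?_
              rw [map_smul, smul_eq_mul, LinearMap.flip_apply, hdiag]
              by_cases hij : i = j
              · subst hij; simp
              · simp [hij]
          _ = bb.repr t j * (FockAux.zc K j.1 * FockAux.zc K j.2) := by
              rw [Finsupp.sum, Finset.sum_ite_eq' _ j, if_pos hj]
      have h2 := h (bb j)
      rw [h1] at h2
      have hz : FockAux.zc K j.1 * FockAux.zc K j.2 ≠ 0 :=
        mul_ne_zero (FockAux.zc_ne_zero _) (FockAux.zc_ne_zero _)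
      exact (mul_eq_zero.1 h2).resolve_right hz
    · exact Finsupp.notMem_support_iff.1 hj
  have : bb.repr t = 0 := Finsupp.ext key
  exact bb.repr.injective (by rw [this, map_zero])

end FockAux3

namespace FockAux4

open MvPolynomial FockAux3

variable {K : Type*} [Field K] [CharZero K]

lemma pd_leibniz (n : ℕ+) (x y : FockSp K) :
    pd n (x * y) = pd n x * y + x * pd n y := by
  simp only [pd_apply, Derivation.leibniz, smul_eq_mul, smul_add]
  rw [mul_smul_comm, smul_mul_assoc, mul_comm ((MvPolynomial.pderiv n) x) y, add_comm]

/-- The degree-`n` "annihilation" part `D_n = α'_n + α''_n` on `F ⊗ F`. -/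
def Dop (n : ℕ+) : (FockSp K ⊗[K] FockSp K) →ₗ[K] (FockSp K ⊗[K] FockSp K) :=
  LinearMap.rTensor (FockSp K) (pd n) + LinearMap.lTensor (FockSp K) (pd n)

lemma rT_leibniz (n : ℕ+) (z w : FockSp K ⊗[K] FockSp K) :
    LinearMap.rTensor (FockSp K) (pd n) (z * w)
      = LinearMap.rTensor (FockSp K) (pd n) z * w
        + z * LinearMap.rTensor (FockSp K) (pd n) w := by
  induction z using TensorProduct.induction_on with
  | zero => simp
  | tmul x y =>
    induction w using TensorProduct.induction_on with
    | zero => simp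
    | tmul x' y' =>
      simp only [Algebra.TensorProduct.tmul_mul_tmul, LinearMap.rTensor_tmul,
        pd_leibniz, TensorProduct.add_tmul]
    | add a b ha hb =>
      simp only [mul_add, map_add, ha, hb]; ring
  | add a b ha hb =>
    simp only [add_mul, map_add, ha, hb]; ring

lemma lT_leibniz (n : ℕ+) (z w : FockSp K ⊗[K] FockSp K) :
    LinearMap.lTensor (FockSp K) (pd n) (z * w)
      = LinearMap.lTensor (FockSp K) (pd n) z * w
        + z * LinearMap.lTensor (FockSp K) (pd n) w := by
  induction z using TensorProduct.induction_on with
  | zero => simp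
  | tmul x y =>
    induction w using TensorProduct.induction_on with
    | zero => simp
    | tmul x' y' =>
      simp only [Algebra.TensorProduct.tmul_mul_tmul, LinearMap.lTensor_tmul,
        pd_leibniz, TensorProduct.tmul_add]
    | add a b ha hb =>
      simp only [mul_add, map_add, ha, hb]; ring
  | add a b ha hb =>
    simp only [add_mul, map_add, ha, hb]; ring

lemma Dop_leibniz (n : ℕ+) (z w : FockSp K ⊗[K] FockSp K) :
    Dop n (z * w) = Dop n z * w + z * Dop n w := by
  simp only [Dop, LinearMap.add_apply, rT_leibniz, lT_leibniz]
  ring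

lemma Dop_one (n : ℕ+) : Dop n (1 : FockSp K ⊗[K] FockSp K) = 0 := by
  have : (1 : FockSp K ⊗[K] FockSp K) = (1 : FockSp K) ⊗ₜ[K] (1 : FockSp K) := rfl
  simp [Dop, this, pd_apply, pderiv_one]

lemma pd_X (n m : ℕ+) :
    pd n (X m : FockSp K) = if m = n then ((n:ℕ):K) • 1 else 0 := by
  by_cases h : m = n
  · subst h; simp [pd_apply, pderiv_X_self]
  · simp [pd_apply, pderiv_X_of_ne h, h]

variable (Θ : (FockSp K ⊗[K] FockSp K) ≃ₐ[K] (FockSp K ⊗[K] FockSp K))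
variable (hΘp : ∀ n : ℕ+,
      Θ (MvPolynomial.X n ⊗ₜ[K] 1) = MvPolynomial.X n ⊗ₜ[K] 1 + 1 ⊗ₜ[K] MvPolynomial.X n)
variable (hΘm : ∀ n : ℕ+,
      Θ (1 ⊗ₜ[K] MvPolynomial.X n) = MvPolynomial.X n ⊗ₜ[K] 1 - 1 ⊗ₜ[K] MvPolynomial.X n)

include hΘp in
lemma Dop_theta_X (n m : ℕ+) :
    Dop n (Θ (X m ⊗ₜ[K] (1 : FockSp K)))
      = Θ ((2:K) • (pd n (X m) ⊗ₜ[K] (1 : FockSp K))) := by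
  rw [hΘp, pd_X]
  by_cases h : m = n
  · subst h
    rw [if_pos rfl]
    have h1 : Dop m ((X m ⊗ₜ[K] (1:FockSp K)) + (1:FockSp K) ⊗ₜ[K] X m)
        = (((m:ℕ):K) • (1:FockSp K)) ⊗ₜ[K] (1:FockSp K)
          + (1:FockSp K) ⊗ₜ[K] (((m:ℕ):K) • (1:FockSp K)) := by
      simp [Dop, pd_apply, pderiv_X_self, pderiv_one]
    rw [h1]
    have e1 : ((((m:ℕ):K) • (1:FockSp K)) ⊗ₜ[K] (1:FockSp K))
        = ((m:ℕ):K) • (1 : FockSp K ⊗[K] FockSp K) := by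
      rw [← TensorProduct.smul_tmul', ← Algebra.TensorProduct.one_def]
    have e2 : ((1:FockSp K) ⊗ₜ[K] (((m:ℕ):K) • (1:FockSp K)))
        = ((m:ℕ):K) • (1 : FockSp K ⊗[K] FockSp K) := by
      rw [TensorProduct.tmul_smul, ← Algebra.TensorProduct.one_def]
    rw [e1, e2, ← two_smul K, map_smul, map_smul, map_one]
  · rw [if_neg h]
    have h1 : Dop n ((X m ⊗ₜ[K] (1:FockSp K)) + (1:FockSp K) ⊗ₜ[K] X m) = 0 := by
      simp [Dop, pd_apply, pderiv_X_of_ne h, pderiv_one]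
    rw [h1]
    simp

end FockAux4

namespace FockAux5

open MvPolynomial FockAux3 FockAux4

variable {K : Type*} [Field K] [CharZero K]
variable (Θ : (FockSp K ⊗[K] FockSp K) ≃ₐ[K] (FockSp K ⊗[K] FockSp K))
variable (hΘp : ∀ n : ℕ+,
      Θ (MvPolynomial.X n ⊗ₜ[K] 1) = MvPolynomial.X n ⊗ₜ[K] 1 + 1 ⊗ₜ[K] MvPolynomial.X n)
variable (hΘm : ∀ n : ℕ+,
      Θ (1 ⊗ₜ[K] MvPolynomial.X n) = MvPolynomial.X n ⊗ₜ[K] 1 - 1 ⊗ₜ[K] MvPolynomial.X n)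

include hΘm in
lemma Dop_theta_Xm (n m : ℕ+) :
    Dop n (Θ ((1 : FockSp K) ⊗ₜ[K] X m)) = 0 := by
  rw [hΘm]
  by_cases h : m = n
  · subst h
    simp [Dop, pd_apply, pderiv_X_self, pderiv_one, ← TensorProduct.smul_tmul']
  · simp [Dop, pd_apply, pderiv_X_of_ne h, pderiv_one]

set_option maxHeartbeats 1000000 in
include hΘp in
lemma Dop_theta_left (n : ℕ+) (x : FockSp K) :
    Dop n (Θ (x ⊗ₜ[K] (1 : FockSp K)))
      = Θ ((2:K) • (pd n x ⊗ₜ[K] (1 : FockSp K))) := by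
  induction x using MvPolynomial.induction_on with
  | C a =>
    rw [show (MvPolynomial.C a : FockSp K) = a • (1:FockSp K) by
      rw [MvPolynomial.smul_eq_C_mul, mul_one]]
    rw [← TensorProduct.smul_tmul', ← Algebra.TensorProduct.one_def, map_smul, map_one,
      map_smul, Dop_one, smul_zero]
    rw [show pd n (a • (1:FockSp K)) = 0 by
      simp [pd_apply, pderiv_one], TensorProduct.zero_tmul, smul_zero, map_zero]
  | add p q hp hq =>
    have e : pd n (p + q) = pd n p + pd n q := map_add _ _ _
    rw [e, TensorProduct.add_tmul, TensorProduct.add_tmul, map_add, map_add, hp, hq,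
      smul_add, map_add]
  | mul_X p m hp =>
    have hsplit : ((p * X m : FockSp K) ⊗ₜ[K] (1 : FockSp K))
        = (p ⊗ₜ[K] (1:FockSp K)) * (X m ⊗ₜ[K] (1:FockSp K)) := by
      rw [Algebra.TensorProduct.tmul_mul_tmul, mul_one]
    have e : pd n (p * X m) = pd n p * X m + p * pd n (X m) := pd_leibniz n p (X m)
    rw [hsplit, e]
    rw [map_mul, Dop_leibniz, hp, Dop_theta_X Θ hΘp n m]
    rw [← map_mul, ← map_mul]
    rw [smul_mul_assoc, mul_smul_comm]
    rw [Algebra.TensorProduct.tmul_mul_tmul, Algebra.TensorProduct.tmul_mul_tmul, mul_one]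
    rw [TensorProduct.add_tmul, smul_add, map_add]

include hΘm in
lemma Dop_theta_right (n : ℕ+) (y : FockSp K) :
    Dop n (Θ ((1 : FockSp K) ⊗ₜ[K] y)) = 0 := by
  induction y using MvPolynomial.induction_on with
  | C a =>
    rw [show (MvPolynomial.C a : FockSp K) = a • (1:FockSp K) by
      rw [MvPolynomial.smul_eq_C_mul, mul_one]]
    rw [TensorProduct.tmul_smul, ← Algebra.TensorProduct.one_def, map_smul, map_one,
      map_smul, Dop_one, smul_zero]
  | add p q hp hq =>
    rw [TensorProduct.tmul_add, map_add, map_add, hp, hq, add_zero]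
  | mul_X p m hp =>
    have hsplit : ((1 : FockSp K) ⊗ₜ[K] (p * X m : FockSp K))
        = ((1:FockSp K) ⊗ₜ[K] p) * ((1:FockSp K) ⊗ₜ[K] X m) := by
      rw [Algebra.TensorProduct.tmul_mul_tmul, mul_one]
    rw [hsplit, map_mul, Dop_leibniz, hp, Dop_theta_Xm Θ hΘm, zero_mul, mul_zero,
      add_zero]

include hΘp hΘm in
lemma Dop_theta (n : ℕ+) (z : FockSp K ⊗[K] FockSp K) :
    Dop n (Θ z) = Θ ((2:K) • LinearMap.rTensor (FockSp K) (pd n) z) := by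
  induction z using TensorProduct.induction_on with
  | zero => simp
  | add a b ha hb => rw [map_add, map_add, ha, hb, map_add, smul_add, map_add]
  | tmul x y =>
    have hsplit : (x ⊗ₜ[K] y : FockSp K ⊗[K] FockSp K)
        = (x ⊗ₜ[K] (1:FockSp K)) * ((1:FockSp K) ⊗ₜ[K] y) := by
      rw [Algebra.TensorProduct.tmul_mul_tmul, mul_one, one_mul]
    rw [LinearMap.rTensor_tmul]
    conv_lhs => rw [hsplit]
    rw [map_mul, Dop_leibniz, Dop_theta_left Θ hΘp, Dop_theta_right Θ hΘm,
      mul_zero, add_zero, ← map_mul, smul_mul_assoc, Algebra.TensorProduct.tmul_mul_tmul,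
      one_mul, mul_one]

end FockAux5

namespace FockAux6

open MvPolynomial FockAux3 FockAux4

variable {K : Type*} [Field K] [CharZero K]

lemma pd_one (n : ℕ+) : pd n (1 : FockSp K) = 0 := by
  simp [pd_apply, pderiv_one]

lemma lT_comm_rT (C : FockSp K →ₗ[K] FockSp K) (f : FockSp K →ₗ[K] FockSp K)
    (w : FockSp K ⊗[K] FockSp K) :
    LinearMap.lTensor (FockSp K) C (LinearMap.rTensor (FockSp K) f w)
      = LinearMap.rTensor (FockSp K) f (LinearMap.lTensor (FockSp K) C w) := by
  induction w using TensorProduct.induction_on with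
  | zero => simp
  | tmul x y => simp
  | add a b ha hb => simp [ha, hb]

lemma lT_mul_left (C : FockSp K →ₗ[K] FockSp K) (n : ℕ+)
    (w : FockSp K ⊗[K] FockSp K) :
    LinearMap.lTensor (FockSp K) C ((MvPolynomial.X n ⊗ₜ[K] 1) * w)
      = (MvPolynomial.X n ⊗ₜ[K] 1) * LinearMap.lTensor (FockSp K) C w := by
  induction w using TensorProduct.induction_on with
  | zero => simp
  | tmul x y =>
    rw [Algebra.TensorProduct.tmul_mul_tmul, one_mul, LinearMap.lTensor_tmul,
      LinearMap.lTensor_tmul, Algebra.TensorProduct.tmul_mul_tmul, one_mul]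
  | add a b ha hb => simp only [mul_add, map_add, ha, hb]

lemma tmul_mulX_split (p b : FockSp K) (n : ℕ+) :
    ((p * X n : FockSp K) ⊗ₜ[K] b)
      = (X n ⊗ₜ[K] (1:FockSp K) + (1:FockSp K) ⊗ₜ[K] X n) * (p ⊗ₜ[K] b)
        - p ⊗ₜ[K] (X n * b) := by
  rw [add_mul, Algebra.TensorProduct.tmul_mul_tmul, Algebra.TensorProduct.tmul_mul_tmul,
    one_mul, one_mul, mul_comm p (X n), add_sub_cancel_right]

end FockAux6


set_option maxHeartbeats 2000000

/-- **Operators on the antidiagonal factor are determined by vacuum matrix elements.**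
Let `K` be a field of characteristic zero and `F = K[p₁, p₂, …]`.  Let `Bf` be the unique
symmetric bilinear form on `F` with `⟨1,1⟩ = 1` and `⟨pₙ x, y⟩ = ⟨x, n ∂y/∂pₙ⟩`, and let
`B₂` be the product form on `F ⊗ F`.  Let `Θ : K[p⁺] ⊗ K[p⁻] → F ⊗ F` be the algebra
isomorphism with `Θ(p⁺ₙ) = p'ₙ + p''ₙ` and `Θ(p⁻ₙ) = p'ₙ - p''ₙ`.  For a linear
endomorphism `C` of `K[p⁻]`, set `A = Θ ∘ (id ⊗ C) ∘ Θ⁻¹`.  If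
`⟨A(1 ⊗ v₁), 1 ⊗ v₂⟩ = 0` for all `v₁, v₂ ∈ F`, then `A = 0`. -/
theorem antidiagonal_operator_vacuum_determined {K : Type*} [Field K] [CharZero K]
    (Bf : FockSp K →ₗ[K] FockSp K →ₗ[K] K)
    (hsymm : ∀ x y, Bf x y = Bf y x)
    (h11 : Bf 1 1 = 1)
    (hadj : ∀ (n : ℕ+) (x y : FockSp K),
      Bf (MvPolynomial.X n * x) y = Bf x (((n : ℕ) : K) • MvPolynomial.pderiv n y))
    (B₂ : (FockSp K ⊗[K] FockSp K) →ₗ[K] (FockSp K ⊗[K] FockSp K) →ₗ[K] K)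
    (hB₂ : ∀ x y x' y' : FockSp K,
      B₂ (x ⊗ₜ[K] y) (x' ⊗ₜ[K] y') = Bf x x' * Bf y y')
    (Θ : (FockSp K ⊗[K] FockSp K) ≃ₐ[K] (FockSp K ⊗[K] FockSp K))
    (hΘp : ∀ n : ℕ+,
      Θ (MvPolynomial.X n ⊗ₜ[K] 1) = MvPolynomial.X n ⊗ₜ[K] 1 + 1 ⊗ₜ[K] MvPolynomial.X n)
    (hΘm : ∀ n : ℕ+,
      Θ (1 ⊗ₜ[K] MvPolynomial.X n) = MvPolynomial.X n ⊗ₜ[K] 1 - 1 ⊗ₜ[K] MvPolynomial.X n)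
    (C : FockSp K →ₗ[K] FockSp K)
    (A : (FockSp K ⊗[K] FockSp K) →ₗ[K] (FockSp K ⊗[K] FockSp K))
    (hA : A = Θ.toLinearMap ∘ₗ LinearMap.lTensor (FockSp K) C ∘ₗ Θ.symm.toLinearMap)
    (hvac : ∀ v₁ v₂ : FockSp K, B₂ (A (1 ⊗ₜ[K] v₁)) (1 ⊗ₜ[K] v₂) = 0) :
    A = 0 := by
  classical
  open MvPolynomial FockAux3 FockAux4 FockAux6 in
  -- `A` commutes with multiplication by the diagonal generators
  have hAd : ∀ (n : ℕ+) (z : FockSp K ⊗[K] FockSp K),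
      A ((X n ⊗ₜ[K] (1:FockSp K) + (1:FockSp K) ⊗ₜ[K] X n) * z)
        = (X n ⊗ₜ[K] (1:FockSp K) + (1:FockSp K) ⊗ₜ[K] X n) * A z := by
    intro n z
    have h1 : (X n ⊗ₜ[K] (1:FockSp K) + (1:FockSp K) ⊗ₜ[K] X n : _)
        = Θ (X n ⊗ₜ[K] (1:FockSp K)) := (hΘp n).symm
    simp only [hA, LinearMap.comp_apply, AlgEquiv.toLinearMap_apply]
    rw [h1, ← map_mul, map_mul Θ.symm, AlgEquiv.symm_apply_apply,
      FockAux6.lT_mul_left]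
  -- `A` commutes with the annihilation operators `Dop n`
  have hAD : ∀ (n : ℕ+) (z : FockSp K ⊗[K] FockSp K),
      A (FockAux4.Dop n z) = FockAux4.Dop n (A z) := by
    intro n z
    have h2 : Θ.symm (FockAux4.Dop n z)
        = (2:K) • LinearMap.rTensor (FockSp K) (FockAux3.pd n) (Θ.symm z) := by
      have h3 := FockAux5.Dop_theta Θ hΘp hΘm n (Θ.symm z)
      rw [AlgEquiv.apply_symm_apply] at h3
      rw [h3, AlgEquiv.symm_apply_apply]
    simp only [hA, LinearMap.comp_apply, AlgEquiv.toLinearMap_apply]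
    rw [h2, map_smul, FockAux6.lT_comm_rT, ← FockAux5.Dop_theta Θ hΘp hΘm n]
  -- vacuum matrix elements vanish on the whole domain
  have claim1 : ∀ z : FockSp K ⊗[K] FockSp K, ∀ w : FockSp K,
      B₂ (A z) ((1:FockSp K) ⊗ₜ[K] w) = 0 := by
    intro z
    induction z using TensorProduct.induction_on with
    | zero => intro w; simp
    | add a b ha hb =>
      intro w
      simp only [map_add, LinearMap.add_apply, ha, hb, add_zero]
    | tmul a b =>
      induction a using MvPolynomial.induction_on generalizing b with
      | C c =>
        intro w
        rw [show (MvPolynomial.C c : FockSp K) = c • (1:FockSp K) by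
            rw [MvPolynomial.smul_eq_C_mul, mul_one],
          ← TensorProduct.smul_tmul', map_smul, map_smul, LinearMap.smul_apply,
          hvac, smul_zero]
      | add p q hp hq =>
        intro w
        simp only [TensorProduct.add_tmul, map_add, LinearMap.add_apply]
        rw [hp, hq, add_zero]
      | mul_X p n hp =>
        intro w
        rw [FockAux6.tmul_mulX_split, map_sub, hAd, map_sub, LinearMap.sub_apply]
        have h4 : B₂ ((X n ⊗ₜ[K] (1:FockSp K) + (1:FockSp K) ⊗ₜ[K] X n) * A (p ⊗ₜ[K] b))
            ((1:FockSp K) ⊗ₜ[K] w)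
            = B₂ (A (p ⊗ₜ[K] b)) ((1:FockSp K) ⊗ₜ[K] (FockAux3.pd n w)) := by
          rw [add_mul, map_add, LinearMap.add_apply,
            FockAux3.B2_adj_fst Bf hadj B₂ hB₂, FockAux3.B2_adj_snd Bf hadj B₂ hB₂,
            LinearMap.rTensor_tmul, LinearMap.lTensor_tmul, FockAux6.pd_one,
            TensorProduct.zero_tmul, map_zero, zero_add]
        rw [h4, hp, hp, sub_zero]
  -- all matrix elements vanish
  have claim2 : ∀ y : FockSp K ⊗[K] FockSp K, ∀ z : FockSp K ⊗[K] FockSp K,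
      B₂ (A z) y = 0 := by
    intro y
    induction y using TensorProduct.induction_on with
    | zero => intro z; simp
    | add a b ha hb =>
      intro z
      rw [map_add, ha, hb, add_zero]
    | tmul a b =>
      induction a using MvPolynomial.induction_on generalizing b with
      | C c =>
        intro z
        rw [show (MvPolynomial.C c : FockSp K) = c • (1:FockSp K) by
            rw [MvPolynomial.smul_eq_C_mul, mul_one],
          ← TensorProduct.smul_tmul', map_smul, claim1, smul_zero]
      | add p q hp hq =>
        intro z
        rw [TensorProduct.add_tmul, map_add, hp, hq, add_zero]
      | mul_X p n hp =>
        intro z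
        rw [FockAux6.tmul_mulX_split, map_sub, hp, sub_zero]
        rw [FockAux3.B2_symm Bf hsymm B₂ hB₂, add_mul, map_add, LinearMap.add_apply,
          FockAux3.B2_adj_fst Bf hadj B₂ hB₂, FockAux3.B2_adj_snd Bf hadj B₂ hB₂,
          ← map_add,
          show LinearMap.rTensor (FockSp K) (FockAux3.pd n) (A z)
              + LinearMap.lTensor (FockSp K) (FockAux3.pd n) (A z)
            = FockAux4.Dop n (A z) from rfl,
          ← hAD, FockAux3.B2_symm Bf hsymm B₂ hB₂, hp]
  have hz : ∀ z, A z = 0 := fun z =>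
    FockAux3.B2_nondeg Bf hsymm h11 hadj B₂ hB₂ (A z) (fun y => claim2 y z)
  exact LinearMap.ext hz

end
end

section
/- Let $K$ be a field of characteristic zero. On $F = K[p_1,p_2,\dots]$ define $\Phi_2 := \sum_{n>0} n\, p_n\,\partial/\partial p_n$ and $\Omega := \sum_{n>0} n^2\, p_n\,\partial/\partial p_n$. On $F\otimes F = K[p'_1,p'_2,\dots]\otimes K[p''_1,p''_2,\dots]$ define $\Phi_2^- := \sum_{n>0} n\,(p'_n - p''_n)\,\big(\partial/\partial p'_n - \partial/\partial p''_n\big)$, and let $P^{(1)} := \pi\otimes\mathrm{id}_F$, where $\pi : F \to F$ sends a polynomial to its constant term. Then for every $v \in F$: $P^{(1)}\Big(\big(\Phi_2^-\big)^2 (1\otimes v)\Big) \;=\; 1\otimes\big(\Phi_2^2 + \Omega\big) v$; i.e., compressing the square of the antidiagonal operator $\Phi_2^-$ to the vacuum sector of the first factor produces, besides $\Phi_2^2$, the extra operator $\Omega$. -/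
/-!
Vacuum compression of the square of the antidiagonal operator `Φ₂⁻` on the double Fock
space produces `Φ₂² + Ω`:  `P⁽¹⁾ ((Φ₂⁻)² (1 ⊗ v)) = 1 ⊗ (Φ₂² + Ω) v`.
-/

noncomputable section

/-- `Φ₂ = ∑_{n>0} n pₙ ∂/∂pₙ` on the rank-one Fock space `F = K[p₁, p₂, …]`. -/
def Phi2 {K : Type*} [Field K] (x : MvPolynomial ℕ+ K) : MvPolynomial ℕ+ K :=
  ∑ᶠ n : ℕ+, ((n : ℕ) : K) • (MvPolynomial.X n * MvPolynomial.pderiv n x)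

/-- `Ω = ∑_{n>0} n² pₙ ∂/∂pₙ` on the rank-one Fock space. -/
def Omega {K : Type*} [Field K] (x : MvPolynomial ℕ+ K) : MvPolynomial ℕ+ K :=
  ∑ᶠ n : ℕ+, (((n : ℕ) : K) ^ 2) • (MvPolynomial.X n * MvPolynomial.pderiv n x)

/-- `Φ₂⁻ = ∑_{n>0} n (p'ₙ - p''ₙ)(∂/∂p'ₙ - ∂/∂p''ₙ)` on the double Fock space
`F ⊗ F = K[p'₁, p'₂, …, p''₁, p''₂, …]`, realized as polynomials in variables indexed by
`ℕ+ ⊕ ℕ+` (`inl` for the `p'` and `inr` for the `p''` variables). -/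
def Phi2Minus {K : Type*} [Field K] (x : MvPolynomial (ℕ+ ⊕ ℕ+) K) :
    MvPolynomial (ℕ+ ⊕ ℕ+) K :=
  ∑ᶠ n : ℕ+, ((n : ℕ) : K) •
    ((MvPolynomial.X (Sum.inl n) - MvPolynomial.X (Sum.inr n)) *
      (MvPolynomial.pderiv (Sum.inl n) x - MvPolynomial.pderiv (Sum.inr n) x))

open MvPolynomial

section AuxLemmas
variable {K : Type*} [Field K]

lemma pderiv_comm'' {σ : Type*} (i j : σ) (p : MvPolynomial σ K) :
    pderiv i (pderiv j p) = pderiv j (pderiv i p) := by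
  classical
  induction p using MvPolynomial.induction_on with
  | C a => simp
  | add p q hp hq => simp [hp, hq]
  | mul_X p n ih =>
      simp only [pderiv_mul, pderiv_X, map_add, ih, Pi.single_apply]
      split_ifs <;> simp <;> ring

lemma pderiv_inl_rename (p : MvPolynomial ℕ+ K) (n : ℕ+) :
    pderiv (Sum.inl n) (rename Sum.inr p) = (0 : MvPolynomial (ℕ+ ⊕ ℕ+) K) := by
  classical
  apply pderiv_eq_zero_of_notMem_vars
  intro h
  have := vars_rename Sum.inr p h
  simp at this

lemma aeval_elim_rename (p : MvPolynomial ℕ+ K) :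
    MvPolynomial.aeval
        (Sum.elim (fun _ : ℕ+ => (0 : MvPolynomial (ℕ+ ⊕ ℕ+) K))
          (fun n : ℕ+ => MvPolynomial.X (Sum.inr n)))
        (rename Sum.inr p) = rename Sum.inr p := by
  rw [aeval_rename, rename_eq_aeval]; rfl

end AuxLemmas

/-- **Vacuum compression of `(Φ₂⁻)²`.**  Let `K` be a field of characteristic zero.
On `F ⊗ F = K[p', p'']`, let `P⁽¹⁾ = π ⊗ id` be the projection sending every `p'`
variable to `0` (i.e. taking the constant term in the first factor), and embed
`v ∈ F` as `1 ⊗ v` (renaming variables `pₙ ↦ p''ₙ`).  Then for every `v ∈ F`: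
`P⁽¹⁾ ((Φ₂⁻)² (1 ⊗ v)) = 1 ⊗ (Φ₂² + Ω) v`. -/
theorem vacuum_compression_Phi2Minus_sq {K : Type*} [Field K] [CharZero K]
    (v : MvPolynomial ℕ+ K) :
    MvPolynomial.aeval
        (Sum.elim (fun _ : ℕ+ => (0 : MvPolynomial (ℕ+ ⊕ ℕ+) K))
          (fun n : ℕ+ => MvPolynomial.X (Sum.inr n)))
        (Phi2Minus (Phi2Minus (MvPolynomial.rename Sum.inr v)))
      = MvPolynomial.rename Sum.inr (Phi2 (Phi2 v) + Omega v) := by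
  classical
  set s : Finset ℕ+ := v.vars with hs
  have hvz : ∀ n ∉ s, pderiv n v = 0 := fun n hn => pderiv_eq_zero_of_notMem_vars hn
  set c : ℕ+ → K := fun n => ((n : ℕ) : K) with hc
  set D : ℕ+ → MvPolynomial (ℕ+ ⊕ ℕ+) K := fun n => rename Sum.inr (pderiv n v) with hD
  set T : ℕ+ → ℕ+ → MvPolynomial (ℕ+ ⊕ ℕ+) K :=
    fun m n => rename Sum.inr (pderiv m (pderiv n v)) with hT
  have hTz : ∀ m ∉ s, ∀ n, T m n = 0 := by
    intro m hm n
    rw [hT]; dsimp only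
    rw [pderiv_comm'', hvz m hm, map_zero, map_zero]
  -- Step A
  have hA : Phi2Minus (rename Sum.inr v)
      = ∑ n ∈ s, c n • ((X (Sum.inl n) - X (Sum.inr n)) * (0 - D n)) := by
    rw [Phi2Minus, finsum_eq_finset_sum_of_support_subset]
    · refine Finset.sum_congr rfl fun n _ => ?_
      rw [pderiv_inl_rename, pderiv_rename Sum.inr_injective]
    · intro n hn
      simp only [Function.mem_support, ne_eq, not_not] at hn ⊢
      by_contra h
      apply hn
      have hn' : n ∉ s := h
      rw [pderiv_inl_rename, pderiv_rename Sum.inr_injective, hvz n hn', map_zero]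
      simp
  -- Step B: derivatives of A
  set A : MvPolynomial (ℕ+ ⊕ ℕ+) K :=
    ∑ n ∈ s, c n • ((X (Sum.inl n) - X (Sum.inr n)) * (0 - D n)) with hAdef
  have hDl : ∀ m, pderiv (Sum.inl m) A
      = ∑ n ∈ s, (if n = m then -(c n • D n) else 0) := by
    intro m
    rw [hAdef, map_sum]
    refine Finset.sum_congr rfl fun n _ => ?_
    simp only [hD, Derivation.map_smul, pderiv_mul, map_sub, map_zero, pderiv_X,
      pderiv_X_of_ne (show Sum.inr n ≠ Sum.inl m by simp), pderiv_inl_rename,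
      Pi.single_apply, Sum.inl.injEq]
    split_ifs with h <;> simp
  have hDl' : ∀ m ∈ s, pderiv (Sum.inl m) A = -(c m • D m) := by
    intro m hm
    rw [hDl, Finset.sum_ite_eq' s m (fun n => -(c n • D n)), if_pos hm]
  have hDl0 : ∀ m ∉ s, pderiv (Sum.inl m) A = 0 := by
    intro m hm
    rw [hDl, Finset.sum_ite_eq' s m (fun n => -(c n • D n)), if_neg hm]
  have hDr : ∀ m, pderiv (Sum.inr m) A
      = (if m ∈ s then c m • D m else 0)
        + ∑ n ∈ s, c n • ((X (Sum.inr n) - X (Sum.inl n)) * T m n) := by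
    intro m
    rw [hAdef, map_sum, ← Finset.sum_ite_eq' s m (fun n => c n • D n),
      ← Finset.sum_add_distrib]
    refine Finset.sum_congr rfl fun n _ => ?_
    simp only [hD, hT, Derivation.map_smul, pderiv_mul, map_sub, map_zero, pderiv_X,
      pderiv_X_of_ne (show Sum.inl n ≠ Sum.inr m by simp),
      pderiv_rename Sum.inr_injective, Pi.single_apply, Sum.inr.injEq]
    split_ifs with h
    · subst h
      ring_nf
      module
    · rw [zero_add]
      congr 1
      ring
  have hDr0 : ∀ m ∉ s, pderiv (Sum.inr m) A = 0 := by
    intro m hm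
    rw [hDr, if_neg hm, zero_add]
    refine Finset.sum_eq_zero fun n _ => ?_
    rw [hTz m hm n, mul_zero, smul_zero]
  -- Step C
  have hB : Phi2Minus A = ∑ m ∈ s, c m • ((X (Sum.inl m) - X (Sum.inr m)) *
      (pderiv (Sum.inl m) A - pderiv (Sum.inr m) A)) := by
    rw [Phi2Minus, finsum_eq_finset_sum_of_support_subset]
    intro m hm
    simp only [Function.mem_support, ne_eq, not_not] at hm ⊢
    by_contra h
    apply hm
    have hm' : m ∉ s := h
    rw [hDl0 m hm', hDr0 m hm']
    simp
  -- Step E : RHS expansions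
  have hP1 : Phi2 v = ∑ n ∈ s, c n • (X n * pderiv n v) := by
    rw [Phi2, finsum_eq_finset_sum_of_support_subset]
    intro n hn
    simp only [Function.mem_support, ne_eq, not_not] at hn ⊢
    by_contra h
    apply hn
    have hn' : n ∉ s := h
    rw [hvz n hn']
    simp
  have hP2 : ∀ m, pderiv m (Phi2 v)
      = (if m ∈ s then c m • pderiv m v else 0)
        + ∑ n ∈ s, c n • (X n * pderiv m (pderiv n v)) := by
    intro m
    rw [hP1, map_sum, ← Finset.sum_ite_eq' s m (fun n => c n • pderiv n v),
      ← Finset.sum_add_distrib]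
    refine Finset.sum_congr rfl fun n _ => ?_
    simp only [Derivation.map_smul, pderiv_mul, pderiv_X, Pi.single_apply]
    split_ifs with h
    · subst h
      rw [one_mul, smul_add]
    · rw [zero_add, zero_mul, zero_add]
  have hP2z : ∀ m ∉ s, pderiv m (Phi2 v) = 0 := by
    intro m hm
    rw [hP2, if_neg hm, zero_add]
    refine Finset.sum_eq_zero fun n _ => ?_
    rw [pderiv_comm'', hvz m hm, map_zero, mul_zero, smul_zero]
  have hPP : Phi2 (Phi2 v) = ∑ m ∈ s, c m • (X m * pderiv m (Phi2 v)) := by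
    rw [Phi2, finsum_eq_finset_sum_of_support_subset]
    intro m hm
    simp only [Function.mem_support, ne_eq, not_not] at hm ⊢
    by_contra h
    apply hm
    have hm' : m ∉ s := h
    rw [hP2z m hm']
    simp
  have hOm : Omega v = ∑ n ∈ s, (c n ^ 2) • (X n * pderiv n v) := by
    rw [Omega, finsum_eq_finset_sum_of_support_subset]
    intro n hn
    simp only [Function.mem_support, ne_eq, not_not] at hn ⊢
    by_contra h
    apply hn
    have hn' : n ∉ s := h
    rw [hvz n hn']
    simp
  -- final assembly
  rw [hA, hB, map_sum, map_add, hPP, hOm, map_sum, map_sum, ← Finset.sum_add_distrib]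
  refine Finset.sum_congr rfl fun m hm => ?_
  rw [hDl' m hm, hDr m, if_pos hm, hP2 m, if_pos hm]
  simp only [hD, hT, map_smul, map_mul, map_sub, map_add, map_neg, map_sum, aeval_X,
    rename_X, Sum.elim_inl, Sum.elim_inr, aeval_elim_rename, sub_zero, smul_eq_C_mul,
    map_pow, Finset.mul_sum, aeval_C, rename_C, MvPolynomial.algebraMap_eq]
  ring

end
end
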